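/- arXiv:1810.02273 — 5 statements merged into one kernel-verified Lean document; each statement's English description precedes it below -/
import Mathlib

section
/- For complex numbers α, β, γ, δ, X with α ≠ β, γ ≠ δ and all products αγX, αδX, βγX, βδX of absolute value less than 1, the series ∑_{m≥0} X^m · (α^{m+1} − β^{m+1})/(α − β) · (γ^{m+1} − δ^{m+1})/(γ − δ) converges absolutely and equals (1 − αβγδX²)/((1 − αγX)(1 − αδX)(1 − βγX)(1 − βδX)). -/
/-- For complex numbers `α, β, γ, δ, X` with `α ≠ β`, `γ ≠ δ` and all of
`|αγX|, |αδX|, |βγX|, |βδX| < 1`, the series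
`∑_{m ≥ 0} X^m · (α^{m+1} − β^{m+1})/(α − β) · (γ^{m+1} − δ^{m+1})/(γ − δ)`
converges absolutely and equals
`(1 − αβγδX²)/((1 − αγX)(1 − αδX)(1 − βγX)(1 − βδX))`. -/
theorem stmt1 (α β γ δ X : ℂ) (hab : α ≠ β) (hgd : γ ≠ δ)
    (h1 : ‖α * γ * X‖ < 1) (h2 : ‖α * δ * X‖ < 1)
    (h3 : ‖β * γ * X‖ < 1) (h4 : ‖β * δ * X‖ < 1) :
    Summable (fun m : ℕ =>
      ‖X ^ m * ((α ^ (m + 1) - β ^ (m + 1)) / (α - β)) *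
        ((γ ^ (m + 1) - δ ^ (m + 1)) / (γ - δ))‖) ∧
      ∑' m : ℕ, X ^ m * ((α ^ (m + 1) - β ^ (m + 1)) / (α - β)) *
          ((γ ^ (m + 1) - δ ^ (m + 1)) / (γ - δ)) =
        (1 - α * β * γ * δ * X ^ 2) /
          ((1 - α * γ * X) * (1 - α * δ * X) * (1 - β * γ * X) * (1 - β * δ * X)) := by
  have hab' : α - β ≠ 0 := sub_ne_zero.mpr hab
  have hgd' : γ - δ ≠ 0 := sub_ne_zero.mpr hgd
  have key : ∀ m : ℕ, X ^ m * ((α ^ (m + 1) - β ^ (m + 1)) / (α - β)) *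
      ((γ ^ (m + 1) - δ ^ (m + 1)) / (γ - δ)) =
      (α * γ * (α * γ * X) ^ m - α * δ * (α * δ * X) ^ m - β * γ * (β * γ * X) ^ m
        + β * δ * (β * δ * X) ^ m) / ((α - β) * (γ - δ)) := by
    intro m
    field_simp
    ring
  have s1 := summable_geometric_of_norm_lt_one h1
  have s2 := summable_geometric_of_norm_lt_one h2
  have s3 := summable_geometric_of_norm_lt_one h3
  have s4 := summable_geometric_of_norm_lt_one h4
  have hsum : Summable (fun m : ℕ => X ^ m * ((α ^ (m + 1) - β ^ (m + 1)) / (α - β)) *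
      ((γ ^ (m + 1) - δ ^ (m + 1)) / (γ - δ))) := by
    simp_rw [key]
    exact ((((s1.mul_left _).sub (s2.mul_left _)).sub (s3.mul_left _)).add
      (s4.mul_left _)).div_const _
  have hz1 : 1 - α * γ * X ≠ 0 := by
    intro h
    rw [sub_eq_zero] at h
    rw [← h] at h1
    simp at h1
  have hz2 : 1 - α * δ * X ≠ 0 := by
    intro h
    rw [sub_eq_zero] at h
    rw [← h] at h2
    simp at h2
  have hz3 : 1 - β * γ * X ≠ 0 := by
    intro h
    rw [sub_eq_zero] at h
    rw [← h] at h3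
    simp at h3
  have hz4 : 1 - β * δ * X ≠ 0 := by
    intro h
    rw [sub_eq_zero] at h
    rw [← h] at h4
    simp at h4
  refine ⟨summable_norm_iff.mpr hsum, ?_⟩
  have tg1 := tsum_geometric_of_norm_lt_one h1
  have tg2 := tsum_geometric_of_norm_lt_one h2
  have tg3 := tsum_geometric_of_norm_lt_one h3
  have tg4 := tsum_geometric_of_norm_lt_one h4
  calc ∑' m : ℕ, X ^ m * ((α ^ (m + 1) - β ^ (m + 1)) / (α - β)) *
          ((γ ^ (m + 1) - δ ^ (m + 1)) / (γ - δ))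
      = ∑' m : ℕ, (α * γ * (α * γ * X) ^ m - α * δ * (α * δ * X) ^ m
          - β * γ * (β * γ * X) ^ m + β * δ * (β * δ * X) ^ m) / ((α - β) * (γ - δ)) := by
        simp_rw [key]
    _ = (α * γ * (1 - α * γ * X)⁻¹ - α * δ * (1 - α * δ * X)⁻¹
          - β * γ * (1 - β * γ * X)⁻¹ + β * δ * (1 - β * δ * X)⁻¹) / ((α - β) * (γ - δ)) := by
        rw [tsum_div_const]
        congr 1
        rw [Summable.tsum_add (((s1.mul_left _).sub (s2.mul_left _)).sub (s3.mul_left _))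
          (s4.mul_left _),
          Summable.tsum_sub ((s1.mul_left _).sub (s2.mul_left _)) (s3.mul_left _),
          Summable.tsum_sub (s1.mul_left _) (s2.mul_left _),
          tsum_mul_left, tsum_mul_left, tsum_mul_left, tsum_mul_left,
          tg1, tg2, tg3, tg4]
    _ = (1 - α * β * γ * δ * X ^ 2) /
          ((1 - α * γ * X) * (1 - α * δ * X) * (1 - β * γ * X) * (1 - β * δ * X)) := by
        have hP : (1 - α * γ * X) * (1 - α * δ * X) * (1 - β * γ * X) * (1 - β * δ * X) ≠ 0 :=
          mul_ne_zero (mul_ne_zero (mul_ne_zero hz1 hz2) hz3) hz4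
        have hmain : α * γ * (1 - α * γ * X)⁻¹ - α * δ * (1 - α * δ * X)⁻¹
            - β * γ * (1 - β * γ * X)⁻¹ + β * δ * (1 - β * δ * X)⁻¹ =
            ((1 - α * β * γ * δ * X ^ 2) * ((α - β) * (γ - δ))) /
              ((1 - α * γ * X) * (1 - α * δ * X) * (1 - β * γ * X) * (1 - β * δ * X)) := by
          rw [eq_div_iff hP]
          linear_combination (α * γ * ((1 - α * δ * X) * (1 - β * γ * X) * (1 - β * δ * X))) *
              inv_mul_cancel₀ hz1
            - (α * δ * ((1 - α * γ * X) * (1 - β * γ * X) * (1 - β * δ * X))) * inv_mul_cancel₀ hz2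
            - (β * γ * ((1 - α * γ * X) * (1 - α * δ * X) * (1 - β * δ * X))) * inv_mul_cancel₀ hz3
            + (β * δ * ((1 - α * γ * X) * (1 - α * δ * X) * (1 - β * γ * X))) * inv_mul_cancel₀ hz4
        rw [hmain, div_div]
        exact mul_div_mul_right _ _ (mul_ne_zero hab' hgd')
end

section
/- Let ℓ be a prime, E the unramified quadratic extension of ℚ_ℓ, σ = I_{GL₂(E)}(χ,ψ) a spherical principal series with α = χ(ℓ), β = ψ(ℓ), normalized Whittaker model 𝒲, and normalized spherical vector φ₀. Let η be an unramified character of ℚ_ℓ^× and L(As(σ⊗η), s) = [(1 − αη(ℓ)ℓ^{−s})(1 − βη(ℓ)ℓ^{−s})(1 − αβη(ℓ)²ℓ^{−2s})]^{−1}. Then for Re(s) sufficiently large, L(As(σ⊗η),s)^{−1} ∫_{ℚ_ℓ^×} |y|^{s−1} η(y) 𝒲_{φ₀}(diag(y,1)) d^×y = (1 − αβη(ℓ)²ℓ^{−2s}), i.e. the zeta integral Z(σ,η,φ₀,s) equals L(η²χ_σ, 2s)^{−1} where χ_σ = χψ. -/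
open MeasureTheory

/-- Zeta integral at the normalized spherical vector, inert case: for `σ` a spherical
principal series of `GL₂(E)` (`E/ℚ_ℓ` unramified quadratic) with Satake parameters
`α, β` and `η` an unramified character of `ℚ_ℓ^×`, for `Re(s)` sufficiently large,
`L(As(σ⊗η),s)⁻¹ ∫_{ℚ_ℓ^×} |y|^{s−1} η(y) 𝒲_{φ₀}(diag(y,1)) d^×y = 1 − αβη(ℓ)²ℓ^{−2s}`,
i.e. `Z(σ,η,φ₀,s) = L(η²χ_σ,2s)⁻¹`. -/
theorem stmt7 (ℓ : ℕ) [Fact ℓ.Prime]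
    [MeasurableSpace ℚ_[ℓ]ˣ] [BorelSpace ℚ_[ℓ]ˣ]
    (ν : Measure ℚ_[ℓ]ˣ) [ν.IsHaarMeasure]
    (hν : ν {y : ℚ_[ℓ]ˣ | ‖(y : ℚ_[ℓ])‖ = 1} = 1)
    (α β : ℂ) (hαβ : α ≠ β)
    (η : ℚ_[ℓ]ˣ →* ℂˣ) (hη : ∀ u : ℚ_[ℓ]ˣ, ‖(u : ℚ_[ℓ])‖ = 1 → η u = 1)
    (lu : ℚ_[ℓ]ˣ) (hlu : (lu : ℚ_[ℓ]) = (ℓ : ℚ_[ℓ]))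
    (e : ℂ) (he : e = (η lu : ℂ))
    (W : ℚ_[ℓ]ˣ → ℂ)
    (hW0 : ∀ y : ℚ_[ℓ]ˣ, 1 < ‖(y : ℚ_[ℓ])‖ → W y = 0)
    (hWm : ∀ (m : ℕ) (y : ℚ_[ℓ]ˣ), ‖(y : ℚ_[ℓ])‖ = (ℓ : ℝ) ^ (-(m : ℤ)) →
      W y = ((ℓ : ℂ) ^ m)⁻¹ * ((α ^ (m + 1) - β ^ (m + 1)) / (α - β))) :
    ∃ r : ℝ, ∀ s : ℂ, r < s.re →
      Integrable (fun y : ℚ_[ℓ]ˣ =>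
        ((‖(y : ℚ_[ℓ])‖ : ℝ) : ℂ) ^ (s - 1) * (η y : ℂ) * W y) ν ∧
      ((1 - α * e * (ℓ : ℂ) ^ (-s)) * (1 - β * e * (ℓ : ℂ) ^ (-s)) *
            (1 - α * β * e ^ 2 * (ℓ : ℂ) ^ (-(2 * s)))) *
          (∫ y : ℚ_[ℓ]ˣ, ((‖(y : ℚ_[ℓ])‖ : ℝ) : ℂ) ^ (s - 1) * (η y : ℂ) * W y ∂ν) =
        1 - α * β * e ^ 2 * (ℓ : ℂ) ^ (-(2 * s)) := by
  have hp := (Fact.out : ℓ.Prime)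
  have hℓ1 : (1 : ℝ) < (ℓ : ℝ) := by exact_mod_cast hp.one_lt
  have hℓ0 : (0 : ℝ) < (ℓ : ℝ) := zero_lt_one.trans hℓ1
  have hℓC : (ℓ : ℂ) ≠ 0 := Nat.cast_ne_zero.mpr hp.ne_zero
  have hαβ' : α - β ≠ 0 := sub_ne_zero.mpr hαβ
  have he0 : e ≠ 0 := by rw [he]; exact Units.ne_zero _
  -- the valuation and its basic properties
  set v : ℚ_[ℓ]ˣ → ℤ := fun y => (y : ℚ_[ℓ]).valuation with hvdef
  have hnorm : ∀ y : ℚ_[ℓ]ˣ, ‖(y : ℚ_[ℓ])‖ = (ℓ : ℝ) ^ (-(v y)) := fun y =>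
    Padic.norm_eq_zpow_neg_valuation (Units.ne_zero y)
  have hveq : ∀ (y : ℚ_[ℓ]ˣ) (n : ℤ), ‖(y : ℚ_[ℓ])‖ = (ℓ : ℝ) ^ (-n) → v y = n := by
    intro y n h
    have h2 : (ℓ : ℝ) ^ (-(v y)) = (ℓ : ℝ) ^ (-n) := (hnorm y).symm.trans h
    exact neg_injective ((zpow_right_strictMono₀ hℓ1).injective h2)
  have hvmul : ∀ a b : ℚ_[ℓ]ˣ, v (a * b) = v a + v b := by
    intro a b
    refine hveq _ _ ?_
    rw [Units.val_mul, norm_mul, hnorm a, hnorm b, ← zpow_add₀ (ne_of_gt hℓ0), neg_add]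
  have hlunorm : ‖(lu : ℚ_[ℓ])‖ = (ℓ : ℝ) ^ (-(1 : ℤ)) := by
    rw [hlu, Padic.norm_p, zpow_neg_one]
  have hvzpow : ∀ k : ℤ, v (lu ^ k) = k := by
    intro k
    refine hveq _ _ ?_
    rw [Units.val_zpow_eq_zpow_val, norm_zpow, hlunorm, ← zpow_mul]
    ring_nf
  -- character values
  have hη_v : ∀ y : ℚ_[ℓ]ˣ, (η y : ℂ) = e ^ (v y) := by
    intro y
    have h1 : v (lu ^ (-(v y)) * y) = 0 := by rw [hvmul, hvzpow]; ring
    have hu : ‖((lu ^ (-(v y)) * y : ℚ_[ℓ]ˣ) : ℚ_[ℓ])‖ = 1 := by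
      rw [hnorm, h1]; norm_num
    have h2 : η (lu ^ (-(v y)) * y) = 1 := hη _ hu
    have h5 : (η lu) ^ (-(v y)) * η y = 1 := by
      rw [← map_zpow, ← map_mul, h2]
    have h3 : η y = (η lu) ^ (v y) := by
      rw [zpow_neg] at h5
      exact (inv_mul_eq_one.mp h5).symm
    rw [h3, Units.val_zpow_eq_zpow_val, he]
  -- shells
  have hmeasS : ∀ n : ℤ, MeasurableSet (v ⁻¹' {n}) := by
    intro n
    have hset : v ⁻¹' {n} = (fun y : ℚ_[ℓ]ˣ => ‖(y : ℚ_[ℓ])‖) ⁻¹' {(ℓ : ℝ) ^ (-n)} := by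
      ext y
      simp only [Set.mem_preimage, Set.mem_singleton_iff]
      exact ⟨fun h => by rw [hnorm, h], fun h => hveq y n h⟩
    rw [hset]
    exact (continuous_norm.comp Units.continuous_val).measurable (measurableSet_singleton _)
  have hmeasv : Measurable v := measurable_to_countable' hmeasS
  have hshell : ∀ n : ℤ, ν (v ⁻¹' {n}) = 1 := by
    intro n
    have h1 : v ⁻¹' {n} = (fun y => lu ^ (-n) * y) ⁻¹' (v ⁻¹' {0}) := by
      ext y
      simp only [Set.mem_preimage, Set.mem_singleton_iff]
      rw [hvmul, hvzpow]
      omega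
    have h2 : v ⁻¹' {0} = {y : ℚ_[ℓ]ˣ | ‖(y : ℚ_[ℓ])‖ = 1} := by
      ext y
      simp only [Set.mem_preimage, Set.mem_singleton_iff, Set.mem_setOf_eq]
      constructor
      · intro h; rw [hnorm, h]; norm_num
      · intro h; exact hveq y 0 (by simpa using h)
    rw [h1, measure_preimage_mul, h2, hν]
  have hmap : ν.map v = Measure.count :=
    Measure.ext_of_singleton fun n => by
      rw [Measure.map_apply hmeasv (measurableSet_singleton n), hshell n,
        Measure.count_singleton]
  -- choice of r
  set M : ℝ := (‖α‖ + ‖β‖ + 1) * ‖e‖ + 1 with hMdef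
  have hM0 : 0 < M := by positivity
  refine ⟨Real.logb ℓ M, fun s hs => ?_⟩
  set P : ℂ := (ℓ : ℂ) ^ (-s) with hPdef
  set t : ℂ := e * P with htdef
  have hPnorm : ‖P‖ = (ℓ : ℝ) ^ (-s.re) := by
    rw [hPdef, show ((ℓ : ℂ)) = (((ℓ : ℝ)) : ℂ) by push_cast; rfl, 
      Complex.norm_cpow_eq_rpow_re_of_pos hℓ0]
    simp
  have hPlt : ‖P‖ < M⁻¹ := by
    rw [hPnorm, Real.rpow_neg hℓ0.le]
    have h1 : (ℓ : ℝ) ^ (Real.logb ℓ M) < (ℓ : ℝ) ^ s.re :=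
      (Real.rpow_lt_rpow_left_iff hℓ1).mpr hs
    rw [Real.rpow_logb hℓ0 (ne_of_gt hℓ1) hM0] at h1
    exact inv_strictAnti₀ hM0 h1
  have key : ∀ c : ℂ, ‖c‖ ≤ ‖α‖ + ‖β‖ → ‖c * t‖ < 1 := by
    intro c hc
    have h1 : ‖c * t‖ = ‖c‖ * ‖e‖ * ‖P‖ := by rw [htdef, norm_mul, norm_mul]; ring
    have h2 : ‖c‖ * ‖e‖ < M := by nlinarith [norm_nonneg e, norm_nonneg c]
    calc ‖c * t‖ = ‖c‖ * ‖e‖ * ‖P‖ := h1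
      _ < M * M⁻¹ := mul_lt_mul'' h2 hPlt (by positivity) (norm_nonneg P)
      _ = 1 := mul_inv_cancel₀ (ne_of_gt hM0)
  have hαt : ‖α * t‖ < 1 := key α (by nlinarith [norm_nonneg β])
  have hβt : ‖β * t‖ < 1 := key β (by nlinarith [norm_nonneg α])
  have hα1 : (1 : ℂ) - α * t ≠ 0 := by
    intro h0
    rw [sub_eq_zero] at h0
    rw [← h0] at hαt
    simp at hαt
  have hβ1 : (1 : ℂ) - β * t ≠ 0 := by
    intro h0
    rw [sub_eq_zero] at h0
    rw [← h0] at hβt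
    simp at hβt
  -- the function on ℤ
  set G : ℕ → ℂ := fun m => (α * (α * t) ^ m - β * (β * t) ^ m) / (α - β) with hGdef
  set Sval : ℂ := (α * (1 - α * t)⁻¹ - β * (1 - β * t)⁻¹) / (α - β) with hSdef
  have hG : HasSum G Sval :=
    (((hasSum_geometric_of_norm_lt_one hαt).mul_left α).sub
      ((hasSum_geometric_of_norm_lt_one hβt).mul_left β)).div_const (α - β)
  set F : ℤ → ℂ := fun n => (((ℓ : ℝ) ^ (-n) : ℝ) : ℂ) ^ (s - 1) * e ^ n *
      (if 0 ≤ n then ((ℓ : ℂ) ^ n.toNat)⁻¹ *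
        ((α ^ (n.toNat + 1) - β ^ (n.toNat + 1)) / (α - β)) else 0) with hFdef
  have hfF : ∀ y : ℚ_[ℓ]ˣ,
      ((‖(y : ℚ_[ℓ])‖ : ℝ) : ℂ) ^ (s - 1) * (η y : ℂ) * W y = F (v y) := by
    intro y
    rcases le_or_gt 0 (v y) with h | h
    · have hNy : ‖(y : ℚ_[ℓ])‖ = (ℓ : ℝ) ^ (-(((v y).toNat : ℕ) : ℤ)) := by
        rw [hnorm, Int.toNat_of_nonneg h]
      rw [hWm (v y).toNat y hNy, hη_v y, hnorm y, hFdef]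
      simp only [if_pos h]
    · rw [hW0 y ?_, hη_v y, hnorm y, hFdef]
      · simp only [if_neg (not_le.mpr h), mul_zero]
      · rw [hnorm]
        exact one_lt_zpow₀ hℓ1 (by omega)
  have hFnat : ∀ m : ℕ, F (m : ℤ) = G m := by
    intro m
    have h0 : (0 : ℤ) ≤ (m : ℤ) := Int.natCast_nonneg m
    have hc1 : (((ℓ : ℝ) ^ (-(m : ℤ)) : ℝ) : ℂ) = (ℓ : ℂ) ^ (-(m : ℤ)) := by
      push_cast
      rfl
    have harg : Complex.arg (ℓ : ℂ) = 0 := Complex.natCast_arg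
    have hcp : ((ℓ : ℂ) ^ (-(m : ℤ))) ^ (s - 1) = (ℓ : ℂ) ^ ((-(m : ℤ) : ℤ) * (s - 1) : ℂ) := by
      rw [Complex.cpow_int_mul' (by rw [harg]; simpa using Real.pi_pos)
        (by rw [harg]; simpa using Real.pi_pos.le)]
    have hnp : ((ℓ : ℂ) ^ m)⁻¹ = (ℓ : ℂ) ^ ((-(m : ℤ) : ℤ) : ℂ) := by
      rw [Complex.cpow_intCast, zpow_neg, zpow_natCast]
    have hsum : (ℓ : ℂ) ^ ((-(m : ℤ) : ℤ) * (s - 1) : ℂ) * (ℓ : ℂ) ^ ((-(m : ℤ) : ℤ) : ℂ)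
        = P ^ m := by
      rw [← Complex.cpow_add _ _ hℓC, hPdef, ← Complex.cpow_nat_mul]
      congr 1
      push_cast
      ring
    rw [hFdef, hGdef]
    simp only [if_pos h0, Int.toNat_natCast]
    rw [hc1, hcp, hnp]
    rw [show (ℓ : ℂ) ^ ((-(m : ℤ) : ℤ) * (s - 1) : ℂ) * e ^ (m : ℤ) *
        ((ℓ : ℂ) ^ ((-(m : ℤ) : ℤ) : ℂ) * ((α ^ (m + 1) - β ^ (m + 1)) / (α - β)))
        = (ℓ : ℂ) ^ ((-(m : ℤ) : ℤ) * (s - 1) : ℂ) * (ℓ : ℂ) ^ ((-(m : ℤ) : ℤ) : ℂ) *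
          (e ^ (m : ℤ) * ((α ^ (m + 1) - β ^ (m + 1)) / (α - β))) by ring, hsum]
    rw [zpow_natCast, htdef]
    field_simp
    ring
  -- summability and integrability
  have hFneg : ∀ m : ℕ, F (-((m : ℤ) + 1)) = 0 := by
    intro m
    rw [hFdef]
    simp only [if_neg (by omega : ¬(0 : ℤ) ≤ -((m : ℤ) + 1)), mul_zero]
  have hFsum : HasSum F Sval := by
    have h1 : HasSum (fun n : ℕ => F n) Sval := by
      simpa only [hFnat] using hG
    have h2 : HasSum (fun n : ℕ => F (-((n : ℤ) + 1))) 0 := by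
      simpa only [hFneg] using hasSum_zero
    simpa using h1.of_nat_of_neg_add_one h2
  have hFnorm : Summable fun n : ℤ => ‖F n‖ := by
    refine Summable.of_nat_of_neg ?_ ?_
    · exact summable_norm_iff.mpr (by simpa only [hFnat] using hG.summable)
    · refine summable_of_ne_finset_zero (s := {0}) ?_
      intro n hn
      simp only [Finset.mem_singleton] at hn
      have : F (-(n : ℤ)) = 0 := by
        rw [hFdef]
        simp only [if_neg (by omega : ¬(0 : ℤ) ≤ -(n : ℤ)), mul_zero]
      simp [this]
  have hFint : Integrable F Measure.count := integrable_count_iff.mpr hFnorm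
  have hFint' : Integrable F (ν.map v) := by rw [hmap]; exact hFint
  have hFasm : AEStronglyMeasurable F (ν.map v) :=
    (measurable_from_top : Measurable F).aestronglyMeasurable
  constructor
  · have := hFint'.comp_measurable hmeasv
    refine this.congr ?_
    exact Filter.Eventually.of_forall fun y => (hfF y).symm
  · have hint : (∫ y : ℚ_[ℓ]ˣ, ((‖(y : ℚ_[ℓ])‖ : ℝ) : ℂ) ^ (s - 1) * (η y : ℂ) * W y ∂ν)
        = Sval := by
      have h1 : (∫ y : ℚ_[ℓ]ˣ, ((‖(y : ℚ_[ℓ])‖ : ℝ) : ℂ) ^ (s - 1) * (η y : ℂ) * W y ∂ν)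
          = ∫ y, F (v y) ∂ν := by
        congr 1
        ext y
        exact hfF y
      rw [h1, ← integral_map hmeasv.aemeasurable hFasm, hmap]
      rw [integral_countable' hFint]
      simp only [count_real_singleton, ENNReal.toReal_one, one_smul]
      exact hFsum.tsum_eq
    rw [hint]
    have hP2 : (ℓ : ℂ) ^ (-(2 * s)) = P ^ 2 := by
      rw [hPdef, show -(2 * s) = ((2 : ℕ) : ℂ) * (-s) by push_cast; ring,
        Complex.cpow_nat_mul]
    have hkey : (1 - α * t) * (1 - β * t) * Sval = 1 := by
      rw [hSdef]
      have ha := mul_inv_cancel₀ hα1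
      have hb := mul_inv_cancel₀ hβ1
      rw [mul_div_assoc', div_eq_one_iff_eq hαβ']
      linear_combination α * (1 - β * t) * ha - β * (1 - α * t) * hb
    rw [hP2]
    have htP : t = e * P := htdef
    linear_combination (1 - α * β * e ^ 2 * P ^ 2) * hkey +
      ((1 - β * t) * (1 - α * β * e ^ 2 * P ^ 2) * Sval * α +
        (1 - α * e * P) * (1 - α * β * e ^ 2 * P ^ 2) * Sval * β) * htP
end

section
/- With notation as in the inert-prime zeta integral setting: if φ₀ is the normalized spherical vector of σ = I_{GL₂(E)}(χ,ψ) and U(ℓ) the Hecke operator whose action on the Whittaker model satisfies 𝒲_{U(ℓ)φ₀}(diag(y,1)) = 0 for v(y) < 0 and = ℓ²𝒲_{φ₀}(diag(ℓy,1)) for v(y) ≥ 0, then Z(σ, η, U(ℓ)φ₀, s) = (ℓ^{s+1}/η(ℓ))·[L(η²χ_σ, 2s)^{−1} − L(As(σ⊗η), s)^{−1}]. -/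
open MeasureTheory
open scoped ENNReal NNReal

/-- Action of `U(ℓ)` on the zeta integral, inert case: if `φ₀` is the normalized
spherical vector and `U(ℓ)` acts on the Whittaker model by
`𝒲_{U(ℓ)φ₀}(diag(y,1)) = 0` for `v(y) < 0` and `= ℓ²𝒲_{φ₀}(diag(ℓy,1))` for
`v(y) ≥ 0`, then
`Z(σ,η,U(ℓ)φ₀,s) = (ℓ^{s+1}/η(ℓ))[L(η²χ_σ,2s)⁻¹ − L(As(σ⊗η),s)⁻¹]`. -/
theorem stmt8 (ℓ : ℕ) [Fact ℓ.Prime]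
    [MeasurableSpace ℚ_[ℓ]ˣ] [BorelSpace ℚ_[ℓ]ˣ]
    (ν : Measure ℚ_[ℓ]ˣ) [ν.IsHaarMeasure]
    (hν : ν {y : ℚ_[ℓ]ˣ | ‖(y : ℚ_[ℓ])‖ = 1} = 1)
    (α β : ℂ) (hαβ : α ≠ β)
    (η : ℚ_[ℓ]ˣ →* ℂˣ) (hη : ∀ u : ℚ_[ℓ]ˣ, ‖(u : ℚ_[ℓ])‖ = 1 → η u = 1)
    (lu : ℚ_[ℓ]ˣ) (hlu : (lu : ℚ_[ℓ]) = (ℓ : ℚ_[ℓ]))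
    (e : ℂ) (he : e = (η lu : ℂ))
    (W WU : ℚ_[ℓ]ˣ → ℂ)
    (hW0 : ∀ y : ℚ_[ℓ]ˣ, 1 < ‖(y : ℚ_[ℓ])‖ → W y = 0)
    (hWm : ∀ (m : ℕ) (y : ℚ_[ℓ]ˣ), ‖(y : ℚ_[ℓ])‖ = (ℓ : ℝ) ^ (-(m : ℤ)) →
      W y = ((ℓ : ℂ) ^ m)⁻¹ * ((α ^ (m + 1) - β ^ (m + 1)) / (α - β)))
    (hWU0 : ∀ y : ℚ_[ℓ]ˣ, 1 < ‖(y : ℚ_[ℓ])‖ → WU y = 0)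
    (hWU : ∀ y : ℚ_[ℓ]ˣ, ‖(y : ℚ_[ℓ])‖ ≤ 1 → WU y = (ℓ : ℂ) ^ 2 * W (lu * y)) :
    ∃ r : ℝ, ∀ s : ℂ, r < s.re →
      ((1 - α * e * (ℓ : ℂ) ^ (-s)) * (1 - β * e * (ℓ : ℂ) ^ (-s)) *
            (1 - α * β * e ^ 2 * (ℓ : ℂ) ^ (-(2 * s)))) *
          (∫ y : ℚ_[ℓ]ˣ, ((‖(y : ℚ_[ℓ])‖ : ℝ) : ℂ) ^ (s - 1) * (η y : ℂ) * WU y ∂ν) =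
        (ℓ : ℂ) ^ (s + 1) / e *
          ((1 - α * β * e ^ 2 * (ℓ : ℂ) ^ (-(2 * s))) -
            (1 - α * e * (ℓ : ℂ) ^ (-s)) * (1 - β * e * (ℓ : ℂ) ^ (-s)) *
              (1 - α * β * e ^ 2 * (ℓ : ℂ) ^ (-(2 * s)))) := by
  classical
  have hp : Nat.Prime ℓ := Fact.out
  have hℓ1R : (1:ℝ) < ℓ := by exact_mod_cast hp.one_lt
  have hℓ0R : (0:ℝ) < ℓ := lt_trans one_pos hℓ1R
  have hℓne : (ℓ:ℝ) ≠ 0 := ne_of_gt hℓ0R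
  have hℓ0C : (ℓ:ℂ) ≠ 0 := by exact_mod_cast hℓne
  have henz : e ≠ 0 := by rw [he]; exact Units.ne_zero _
  have habne : α - β ≠ 0 := sub_ne_zero.mpr hαβ
  -- norm of lu^n
  have hlun : ∀ n : ℤ, ‖((lu ^ n : ℚ_[ℓ]ˣ) : ℚ_[ℓ])‖ = (ℓ:ℝ) ^ (-n) := by
    intro n
    rw [Units.val_zpow_eq_zpow_val, norm_zpow, hlu, Padic.norm_p, inv_zpow, ← zpow_neg]
  have hlunn : ∀ n : ℕ, ‖((lu ^ n : ℚ_[ℓ]ˣ) : ℚ_[ℓ])‖ = (ℓ:ℝ) ^ (-(n:ℤ)) := by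
    intro n
    have := hlun (n : ℤ)
    rwa [zpow_natCast] at this
  -- shells
  set Sz : ℤ → Set ℚ_[ℓ]ˣ := fun n => {y | ‖(y:ℚ_[ℓ])‖ = (ℓ:ℝ) ^ (-n)} with hSzdef
  have hSzm : ∀ n, MeasurableSet (Sz n) := by
    intro n
    exact (continuous_norm.comp Units.continuous_val).measurable (measurableSet_singleton _)
  have hSzν : ∀ n : ℤ, ν (Sz n) = 1 := by
    intro n
    have he : Sz n = (fun y => lu ^ (-n) * y) ⁻¹' (Sz 0) := by
      ext y
      simp only [Set.mem_preimage, hSzdef, Set.mem_setOf_eq, Units.val_mul, norm_mul, hlun,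
        neg_zero, zpow_zero, neg_neg]
      constructor
      · intro h
        rw [h, ← zpow_add₀ hℓne]
        simp
      · intro h
        have := eq_inv_of_mul_eq_one_right h
        rw [this, ← zpow_neg]
    rw [he, measure_preimage_mul]
    simpa [hSzdef] using hν
  -- pairwise disjoint (over ℕ)
  have hinj : Function.Injective fun n : ℤ => (ℓ:ℝ) ^ n :=
    zpow_right_injective₀ hℓ0R (ne_of_gt hℓ1R)
  have hdis : Pairwise (Function.onFun Disjoint fun m : ℕ => Sz (m:ℤ)) := by
    intro m m' hmm
    refine Set.disjoint_left.mpr ?_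
    intro y hy hy'
    simp only [hSzdef, Set.mem_setOf_eq] at hy hy'
    have : (-(m:ℤ)) = (-(m':ℤ)) := hinj (hy.symm.trans hy')
    omega
  -- valuation and η
  have hval : ∀ y : ℚ_[ℓ]ˣ, ‖(y:ℚ_[ℓ])‖ = (ℓ:ℝ) ^ (-(y:ℚ_[ℓ]).valuation) :=
    fun y => Padic.norm_eq_zpow_neg_valuation (Units.ne_zero y)
  have hmemSz : ∀ (y : ℚ_[ℓ]ˣ) (n : ℤ), y ∈ Sz n ↔ (y:ℚ_[ℓ]).valuation = n := by
    intro y n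
    simp only [hSzdef, Set.mem_setOf_eq, hval y]
    exact ⟨fun h => by have := hinj h; omega, fun h => by rw [h]⟩
  have hηm : ∀ (m : ℕ) (y : ℚ_[ℓ]ˣ), y ∈ Sz (m:ℤ) → (η y : ℂ) = e ^ m := by
    intro m y hy
    have h1 : ‖(((lu ^ m)⁻¹ * y : ℚ_[ℓ]ˣ) : ℚ_[ℓ])‖ = 1 := by
      rw [Units.val_mul, norm_mul, Units.val_inv_eq_inv_val, norm_inv, hlunn m]
      rw [hmemSz] at hy
      rw [hval y, hy, ← zpow_neg, ← zpow_add₀ hℓne]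
      simp
    have h2 : η ((lu ^ m)⁻¹ * y) = 1 := hη _ h1
    have h3 : y = lu ^ m * ((lu ^ m)⁻¹ * y) := by group
    rw [h3, map_mul, map_pow, h2, mul_one, he]
    push_cast
    ring
  -- choose r
  set M : ℝ := ‖e‖ * (‖α‖ + ‖β‖) + 1 with hMdef
  have hM0 : 0 < M := by positivity
  refine ⟨Real.logb ℓ M, fun s hs => ?_⟩
  set u : ℂ := (ℓ:ℂ) ^ (-s) with hu
  have hcast : ((ℓ:ℕ):ℂ) = (((ℓ:ℕ):ℝ):ℂ) := by push_cast; ring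
  have hunorm : ‖u‖ = ((ℓ:ℝ) ^ s.re)⁻¹ := by
    rw [hu, hcast, Complex.norm_cpow_eq_rpow_re_of_pos hℓ0R, Complex.neg_re,
      Real.rpow_neg (le_of_lt hℓ0R)]
  have hu0 : u ≠ 0 := by
    have : 0 < ‖u‖ := by
      rw [hunorm]
      positivity
    exact norm_pos_iff.mp this
  set t : ℂ := e * u with htdef
  have ht0 : t ≠ 0 := mul_ne_zero henz hu0
  have hsre : M < (ℓ:ℝ) ^ s.re := by
    have h1 : (ℓ:ℝ) ^ Real.logb ℓ M < (ℓ:ℝ) ^ s.re :=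
      (Real.rpow_lt_rpow_left_iff hℓ1R).mpr hs
    rwa [Real.rpow_logb hℓ0R (ne_of_gt hℓ1R) hM0] at h1
  have hnorm_aux : ∀ γ : ℂ, ‖γ‖ ≤ ‖α‖ + ‖β‖ → ‖t * γ‖ < 1 := by
    intro γ hγ
    have h1 : ‖t * γ‖ = (‖e‖ * ‖γ‖) / (ℓ:ℝ) ^ s.re := by
      rw [htdef, norm_mul, norm_mul, hunorm]; ring
    rw [h1, div_lt_one (by positivity)]
    calc ‖e‖ * ‖γ‖ ≤ ‖e‖ * (‖α‖ + ‖β‖) :=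
          mul_le_mul_of_nonneg_left hγ (norm_nonneg _)
      _ < M := by rw [hMdef]; linarith
      _ < (ℓ:ℝ) ^ s.re := hsre
  have htα : ‖t * α‖ < 1 := hnorm_aux α (by linarith [norm_nonneg β])
  have htβ : ‖t * β‖ < 1 := hnorm_aux β (by linarith [norm_nonneg α])
  have h1tα : 1 - t * α ≠ 0 := by
    intro h
    have : (1:ℂ) = t * α := by linear_combination h
    rw [← this] at htα
    simp at htα
  have h1tβ : 1 - t * β ≠ 0 := by
    intro h
    have : (1:ℂ) = t * β := by linear_combination h
    rw [← this] at htβ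
    simp at htβ
  -- geometric series
  set c : ℕ → ℂ := fun m => (ℓ:ℂ) / (α - β) * ((t*α)^m * α^2 - (t*β)^m * β^2) with hcdef
  set V : ℂ := (ℓ:ℂ) / (α - β) * ((1 - t*α)⁻¹ * α^2 - (1 - t*β)⁻¹ * β^2) with hVdef
  have hcV : HasSum c V :=
    (((hasSum_geometric_of_norm_lt_one htα).mul_right (α^2)).sub
      ((hasSum_geometric_of_norm_lt_one htβ).mul_right (β^2))).mul_left _
  -- the integrand
  set F : ℚ_[ℓ]ˣ → ℂ := fun y => ((‖(y:ℚ_[ℓ])‖ : ℝ) : ℂ) ^ (s-1) * (η y : ℂ) * WU y with hFdef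
  -- shell constancy
  have hFc : ∀ (m : ℕ), ∀ y ∈ Sz (m:ℤ), F y = c m := by
    intro m y hy
    have hy' : ‖(y:ℚ_[ℓ])‖ = (ℓ:ℝ) ^ (-(m:ℤ)) := hy
    have hle1 : ‖(y:ℚ_[ℓ])‖ ≤ 1 := by
      rw [hy']
      exact zpow_le_one_of_nonpos₀ (le_of_lt hℓ1R) (by omega)
    have hluy : ‖((lu * y : ℚ_[ℓ]ˣ) : ℚ_[ℓ])‖ = (ℓ:ℝ) ^ (-((m+1:ℕ):ℤ)) := by
      rw [Units.val_mul, norm_mul, hlu, Padic.norm_p, hy', ← zpow_neg_one,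
        ← zpow_add₀ hℓne]
      congr 1
      push_cast
      ring
    have hW' := hWm (m+1) (lu*y) hluy
    have hWU' : WU y = (ℓ:ℂ)^2 * (((ℓ:ℂ)^(m+1))⁻¹ * ((α^(m+2) - β^(m+2))/(α-β))) := by
      rw [hWU y hle1, hW']
    have hcpow : ((‖(y:ℚ_[ℓ])‖ : ℝ) : ℂ) ^ (s-1) = ((ℓ:ℂ) * u)^m := by
      rw [hy']
      have h1 : (((ℓ:ℝ) ^ (-(m:ℤ)) : ℝ) : ℂ) = ((ℓ:ℂ)) ^ (-(m:ℤ)) := by push_cast; ring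
      have harg : ((ℓ:ℂ)).arg = 0 := Complex.natCast_arg
      rw [h1, ← Complex.cpow_int_mul' (x := (ℓ:ℂ)) (n := -(m:ℤ))
        (by rw [harg]; simpa using Real.pi_pos)
        (by rw [harg]; simpa using (le_of_lt Real.pi_pos)) (s-1)]
      rw [Complex.cpow_int_mul, zpow_neg, zpow_natCast, ← inv_pow]
      congr 1
      rw [← Complex.cpow_neg, neg_sub, sub_eq_add_neg, Complex.cpow_add _ _ hℓ0C,
        Complex.cpow_one, hu]
    show ((‖(y:ℚ_[ℓ])‖ : ℝ) : ℂ) ^ (s-1) * (η y : ℂ) * WU y = c m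
    rw [hcpow, hηm m y hy, hWU', hcdef, htdef]
    have hpow2 : ((ℓ:ℂ)^(m+1)) ≠ 0 := pow_ne_zero _ hℓ0C
    field_simp
    ring
  -- vanishing off the union
  have hbig : ∀ y : ℚ_[ℓ]ˣ, (y:ℚ_[ℓ]).valuation < 0 → F y = 0 := by
    intro y hv
    have h1 : 1 < ‖(y:ℚ_[ℓ])‖ := by
      rw [hval y]
      have h2 : (0:ℤ) < -(y:ℚ_[ℓ]).valuation := by omega
      exact one_lt_zpow₀ hℓ1R h2
    rw [hFdef]
    simp only [hWU0 y h1, mul_zero]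
  have hmem' : ∀ y : ℚ_[ℓ]ˣ, 0 ≤ (y:ℚ_[ℓ]).valuation → y ∈ Sz ((y:ℚ_[ℓ]).valuation) := by
    intro y hv
    exact (hmemSz y _).mpr rfl
  have hF0 : ∀ y : ℚ_[ℓ]ˣ, y ∉ (⋃ m : ℕ, Sz (m:ℤ)) → F y = 0 := by
    intro y hy
    by_cases hv : 0 ≤ (y:ℚ_[ℓ]).valuation
    · exfalso
      apply hy
      refine Set.mem_iUnion.mpr ⟨(y:ℚ_[ℓ]).valuation.toNat, ?_⟩
      have : (((y:ℚ_[ℓ]).valuation.toNat : ℤ)) = (y:ℚ_[ℓ]).valuation := Int.toNat_of_nonneg hv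
      rw [this]
      exact hmem' y hv
    · exact hbig y (by omega)
  -- F as a function of the valuation
  have hvmeas : Measurable (fun y : ℚ_[ℓ]ˣ => (y:ℚ_[ℓ]).valuation) := by
    apply measurable_to_countable'
    intro n
    have : (fun y : ℚ_[ℓ]ˣ => (y:ℚ_[ℓ]).valuation) ⁻¹' {n} = Sz n := by
      ext y
      simp only [Set.mem_preimage, Set.mem_singleton_iff, hmemSz y n]
    rw [this]
    exact hSzm n
  have hFmeas : Measurable F := by
    have hFG : F = (fun n : ℤ => if 0 ≤ n then c n.toNat else 0) ∘
        (fun y : ℚ_[ℓ]ˣ => (y:ℚ_[ℓ]).valuation) := by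
      funext y
      simp only [Function.comp_apply]
      by_cases hv : 0 ≤ (y:ℚ_[ℓ]).valuation
      · rw [if_pos hv]
        apply hFc
        have : (((y:ℚ_[ℓ]).valuation.toNat : ℤ)) = (y:ℚ_[ℓ]).valuation := Int.toNat_of_nonneg hv
        rw [this]
        exact hmem' y hv
      · rw [if_neg hv]
        exact hbig y (by omega)
    rw [hFG]
    exact measurable_from_top.comp hvmeas
  -- integrability
  have hcsum : Summable (fun m : ℕ => ‖c m‖₊) := by
    rw [← NNReal.summable_coe]
    simpa only [coe_nnnorm] using (summable_norm_iff.mpr hcV.summable)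
  have hInt : Integrable F ν := by
    refine ⟨hFmeas.aestronglyMeasurable, ?_⟩
    rw [hasFiniteIntegral_def]
    have hind : (fun y => (‖F y‖₊ : ℝ≥0∞)) =
        Set.indicator (⋃ m : ℕ, Sz (m:ℤ)) (fun y => (‖F y‖₊ : ℝ≥0∞)) := by
      funext y
      by_cases h : y ∈ ⋃ m : ℕ, Sz (m:ℤ)
      · rw [Set.indicator_of_mem h]
      · rw [Set.indicator_of_notMem h, hF0 y h]
        simp
    have hswap : (∫⁻ y, (‖F y‖₊ : ℝ≥0∞) ∂ν) =
        ∫⁻ y in (⋃ m : ℕ, Sz (m:ℤ)), (‖F y‖₊ : ℝ≥0∞) ∂ν := by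
      rw [← lintegral_indicator (MeasurableSet.iUnion fun m : ℕ => hSzm (m:ℤ))]
      exact lintegral_congr fun y => congrFun hind y
    change (∫⁻ y, (‖F y‖₊ : ℝ≥0∞) ∂ν) < ⊤
    rw [hswap, lintegral_iUnion (fun m : ℕ => hSzm (m:ℤ)) hdis]
    have heach : ∀ m : ℕ, (∫⁻ y in Sz (m:ℤ), (‖F y‖₊ : ℝ≥0∞) ∂ν) = (‖c m‖₊ : ℝ≥0∞) := by
      intro m
      rw [setLIntegral_congr_fun (hSzm (m:ℤ))
        (fun y hy => show (‖F y‖₊ : ℝ≥0∞) = ‖c m‖₊ by rw [hFc m y hy])]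
      rw [setLIntegral_const, hSzν (m:ℤ), mul_one]
    simp only [heach]
    exact lt_of_le_of_ne le_top (ENNReal.tsum_coe_ne_top_iff_summable.mpr hcsum)
  -- compute the integral
  have hsum : HasSum (fun m : ℕ => ∫ y in Sz (m:ℤ), F y ∂ν)
      (∫ y in (⋃ m : ℕ, Sz (m:ℤ)), F y ∂ν) :=
    hasSum_integral_iUnion (fun m => hSzm (m:ℤ)) hdis hInt.integrableOn
  have h2 : (∫ y in (⋃ m : ℕ, Sz (m:ℤ)), F y ∂ν) = ∫ y, F y ∂ν :=
    setIntegral_eq_integral_of_forall_compl_eq_zero hF0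
  have h3 : (fun m : ℕ => ∫ y in Sz (m:ℤ), F y ∂ν) = c := by
    funext m
    rw [setIntegral_congr_fun (hSzm (m:ℤ)) (fun y hy => hFc m y hy), setIntegral_const,
      measureReal_def, hSzν (m:ℤ)]
    simp
  rw [h2, h3] at hsum
  have hIV : (∫ y, F y ∂ν) = V := (hcV.unique hsum).symm
  -- final algebra
  have hIV' : (∫ y : ℚ_[ℓ]ˣ, ((‖(y : ℚ_[ℓ])‖ : ℝ) : ℂ) ^ (s - 1) * (η y : ℂ) * WU y ∂ν) = V := hIV
  rw [hIV']
  have h2s : (ℓ:ℂ) ^ (-(2*s)) = u^2 := by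
    have : -(2*s) = (2:ℕ) * (-s) := by push_cast; ring
    rw [this, Complex.cpow_nat_mul, hu]
  have hs1 : (ℓ:ℂ) ^ (s+1) = (ℓ:ℂ) * u⁻¹ := by
    rw [Complex.cpow_add _ _ hℓ0C, Complex.cpow_one, hu, Complex.cpow_neg, inv_inv]
    ring
  rw [h2s, hs1, hVdef]
  have he1 : (1:ℂ) - t * α ≠ 0 := h1tα
  have he2 : (1:ℂ) - t * β ≠ 0 := h1tβ
  rw [htdef] at he1 he2 ⊢
  rw [show (1:ℂ) - α * e * u = 1 - e * u * α by ring, show (1:ℂ) - β * e * u = 1 - e * u * β by ring]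
  field_simp
  ring
end

section
/- Let σ = I(χ₁,ψ₁) ⊗ I(χ₂,ψ₂) be an unramified principal series of GL₂(ℚ_ℓ)×GL₂(ℚ_ℓ) with Satake parameters α,β,γ,δ, η an unramified character of ℚ_ℓ^×, L(σ⊗η,s) = [(1−αγη(ℓ)ℓ^{−s})(1−αδη(ℓ)ℓ^{−s})(1−βγη(ℓ)ℓ^{−s})(1−βδη(ℓ)ℓ^{−s})]^{−1}, and Z(σ,η,f,s) = L(σ⊗η,s)^{−1}∫_{ℚ_ℓ^×}|y|^{s−1}η(y)𝒲_f(diag(y,1),diag(y,1))d^×y. Then for the normalized spherical vector φ₀ and Re(s) sufficiently large, Z(σ,η,φ₀,s) = (1 − χ_σ(ℓ)η(ℓ)²ℓ^{−2s}), where χ_σ = χ₁ψ₁χ₂ψ₂. -/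
open MeasureTheory

set_option maxHeartbeats 3200000 in
/-- Zeta integral at the normalized spherical vector, split case: for
`σ = I(χ₁,ψ₁)⊗I(χ₂,ψ₂)` with Satake parameters `α,β,γ,δ` and `η` unramified, for
`Re(s)` sufficiently large,
`Z(σ,η,φ₀,s) = L(σ⊗η,s)⁻¹ ∫ |y|^{s−1} η(y) 𝒲₀(diag(y,1),diag(y,1)) d^×y
 = 1 − χ_σ(ℓ)η(ℓ)²ℓ^{−2s}` with `χ_σ(ℓ) = αβγδ`. -/
theorem stmt10 (ℓ : ℕ) [Fact ℓ.Prime]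
    [MeasurableSpace ℚ_[ℓ]ˣ] [BorelSpace ℚ_[ℓ]ˣ]
    (ν : Measure ℚ_[ℓ]ˣ) [ν.IsHaarMeasure]
    (hν : ν {y : ℚ_[ℓ]ˣ | ‖(y : ℚ_[ℓ])‖ = 1} = 1)
    (α β γ δ : ℂ) (hαβ : α ≠ β) (hγδ : γ ≠ δ)
    (η : ℚ_[ℓ]ˣ →* ℂˣ) (hη : ∀ u : ℚ_[ℓ]ˣ, ‖(u : ℚ_[ℓ])‖ = 1 → η u = 1)
    (lu : ℚ_[ℓ]ˣ) (hlu : (lu : ℚ_[ℓ]) = (ℓ : ℚ_[ℓ]))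
    (e : ℂ) (he : e = (η lu : ℂ))
    (W : ℚ_[ℓ]ˣ → ℂ)
    (hW0 : ∀ y : ℚ_[ℓ]ˣ, 1 < ‖(y : ℚ_[ℓ])‖ → W y = 0)
    (hWm : ∀ (m : ℕ) (y : ℚ_[ℓ]ˣ), ‖(y : ℚ_[ℓ])‖ = (ℓ : ℝ) ^ (-(m : ℤ)) →
      W y = ((ℓ : ℂ) ^ m)⁻¹ * ((α ^ (m + 1) - β ^ (m + 1)) / (α - β)) *
        ((γ ^ (m + 1) - δ ^ (m + 1)) / (γ - δ))) :
    ∃ r : ℝ, ∀ s : ℂ, r < s.re →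
      Integrable (fun y : ℚ_[ℓ]ˣ =>
        ((‖(y : ℚ_[ℓ])‖ : ℝ) : ℂ) ^ (s - 1) * (η y : ℂ) * W y) ν ∧
      ((1 - α * γ * e * (ℓ : ℂ) ^ (-s)) * (1 - α * δ * e * (ℓ : ℂ) ^ (-s)) *
            (1 - β * γ * e * (ℓ : ℂ) ^ (-s)) * (1 - β * δ * e * (ℓ : ℂ) ^ (-s))) *
          (∫ y : ℚ_[ℓ]ˣ, ((‖(y : ℚ_[ℓ])‖ : ℝ) : ℂ) ^ (s - 1) * (η y : ℂ) * W y ∂ν) =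
        1 - α * β * γ * δ * e ^ 2 * (ℓ : ℂ) ^ (-(2 * s)) := by
  have hp : (1:ℝ) < (ℓ:ℝ) := by exact_mod_cast (Fact.out : ℓ.Prime).one_lt
  have hℓ0 : (0:ℝ) < (ℓ:ℝ) := lt_trans one_pos hp
  have hℓC : (ℓ:ℂ) ≠ 0 := Nat.cast_ne_zero.mpr (Fact.out : ℓ.Prime).ne_zero
  have hab : α - β ≠ 0 := sub_ne_zero.mpr hαβ
  have hgd : γ - δ ≠ 0 := sub_ne_zero.mpr hγδ
  have hD : (α - β) * (γ - δ) ≠ 0 := mul_ne_zero hab hgd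
  -- the shells
  set S : ℕ → Set ℚ_[ℓ]ˣ := fun m => {y | ‖(y : ℚ_[ℓ])‖ = (ℓ:ℝ) ^ (-(m:ℤ))} with hS
  have hnormcont : Continuous fun y : ℚ_[ℓ]ˣ => ‖(y:ℚ_[ℓ])‖ :=
    continuous_norm.comp Units.continuous_val
  have hSm : ∀ m, MeasurableSet (S m) := fun m =>
    hnormcont.measurable (measurableSet_singleton _)
  have hzinj : Function.Injective fun v : ℤ => (ℓ:ℝ) ^ v :=
    zpow_right_injective₀ hℓ0 hp.ne'
  have hdisj : Pairwise (Function.onFun Disjoint S) := by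
    intro m n hmn
    rw [Function.onFun, Set.disjoint_left]
    intro y hym hyn
    have h1 : ‖(y : ℚ_[ℓ])‖ = (ℓ:ℝ) ^ (-(m:ℤ)) := hym
    have h2 : ‖(y : ℚ_[ℓ])‖ = (ℓ:ℝ) ^ (-(n:ℤ)) := hyn
    have : (ℓ:ℝ) ^ (-(m:ℤ)) = (ℓ:ℝ) ^ (-(n:ℤ)) := by rw [← h1, h2]
    exact hmn (by exact_mod_cast neg_injective (hzinj this))
  -- norm of the uniformizer
  have hlun : ‖(lu : ℚ_[ℓ])‖ = (ℓ:ℝ)⁻¹ := by rw [hlu]; exact Padic.norm_p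
  -- measure of shells
  have hνS : ∀ m : ℕ, ν (S m) = 1 := by
    intro m
    have hpre : (fun y => lu ^ m * y) ⁻¹' (S m) = {y : ℚ_[ℓ]ˣ | ‖(y:ℚ_[ℓ])‖ = 1} := by
      ext y
      have hnm : ‖((lu ^ m * y : ℚ_[ℓ]ˣ) : ℚ_[ℓ])‖ = (ℓ:ℝ) ^ (-(m:ℤ)) * ‖(y:ℚ_[ℓ])‖ := by
        rw [Units.val_mul, Units.val_pow_eq_pow_val, norm_mul, norm_pow, hlun,
          zpow_neg, zpow_natCast, inv_pow]
      have hne : (ℓ:ℝ) ^ (-(m:ℤ)) ≠ 0 := zpow_ne_zero _ hℓ0.ne'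
      simp only [Set.mem_preimage, hS, Set.mem_setOf_eq, hnm]
      constructor
      · intro h
        exact mul_left_cancel₀ hne (h.trans (mul_one _).symm)
      · intro h; rw [h, mul_one]
    calc ν (S m) = ν ((fun y => lu ^ m * y) ⁻¹' (S m)) :=
          (measure_preimage_mul ν _ _).symm
      _ = 1 := by rw [hpre]; exact hν
  -- η on shells
  have hηS : ∀ (m : ℕ) (y : ℚ_[ℓ]ˣ), y ∈ S m → ((η y : ℂˣ) : ℂ) = e ^ m := by
    intro m y hy
    have hy' : ‖(y:ℚ_[ℓ])‖ = (ℓ:ℝ) ^ (-(m:ℤ)) := hy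
    have hu : ‖((lu⁻¹ ^ m * y : ℚ_[ℓ]ˣ) : ℚ_[ℓ])‖ = 1 := by
      rw [Units.val_mul, Units.val_pow_eq_pow_val, Units.val_inv_eq_inv_val, norm_mul,
        norm_pow, norm_inv, hlun, inv_inv, hy', zpow_neg, zpow_natCast]
      exact mul_inv_cancel₀ (pow_ne_zero _ hℓ0.ne')
    have h1 : η (lu⁻¹ ^ m * y) = 1 := hη _ hu
    have h2 : y = lu ^ m * (lu⁻¹ ^ m * y) := by
      rw [← mul_assoc, ← mul_pow, mul_inv_cancel, one_pow, one_mul]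
    calc ((η y : ℂˣ) : ℂ) = ((η (lu ^ m) * η (lu⁻¹ ^ m * y) : ℂˣ) : ℂ) := by
          rw [← map_mul, ← h2]
      _ = e ^ m := by
          rw [h1, mul_one, map_pow, he, Units.val_pow_eq_pow_val]
  -- choose r
  set M : ℝ := (‖α‖ + ‖β‖ + 1) * (‖γ‖ + ‖δ‖ + 1) * (‖e‖ + 1) with hM
  have hM1 : 1 ≤ M := by
    have h1 := norm_nonneg α; have h2 := norm_nonneg β
    have h3 := norm_nonneg γ; have h4 := norm_nonneg δ
    have h5 := norm_nonneg e
    have f1 : (1:ℝ) ≤ ‖α‖ + ‖β‖ + 1 := by linarith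
    have f2 : (1:ℝ) ≤ ‖γ‖ + ‖δ‖ + 1 := by linarith
    have f3 : (1:ℝ) ≤ ‖e‖ + 1 := by linarith
    calc (1:ℝ) = 1 * 1 * 1 := by ring
      _ ≤ M := by
          rw [hM]
          exact mul_le_mul (mul_le_mul f1 f2 one_pos.le (by linarith)) f3 one_pos.le
            (by positivity)
  have hM0 : 0 < M := lt_of_lt_of_le one_pos hM1
  have hLP : 0 < Real.log ℓ := Real.log_pos hp
  refine ⟨Real.log M / Real.log ℓ, fun s hs => ?_⟩
  have hMs : M < (ℓ:ℝ) ^ s.re := by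
    have h1 : Real.log M < s.re * Real.log ℓ := by
      have := (div_lt_iff₀ hLP).mp hs
      linarith
    calc M = Real.exp (Real.log M) := (Real.exp_log hM0).symm
      _ < Real.exp (s.re * Real.log ℓ) := Real.exp_lt_exp.mpr h1
      _ = (ℓ:ℝ) ^ s.re := by rw [Real.rpow_def_of_pos hℓ0, mul_comm]
  have hrp0 : (0:ℝ) < (ℓ:ℝ) ^ s.re := Real.rpow_pos_of_pos hℓ0 _
  have hnormcp : ‖(ℓ:ℂ) ^ (-s)‖ = (ℓ:ℝ) ^ (-s.re) := by
    rw [Complex.norm_natCast_cpow_of_pos (Fact.out : ℓ.Prime).pos, Complex.neg_re]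
  have hq : ∀ x : ℂ, ‖x‖ ≤ M → ‖x * (ℓ:ℂ) ^ (-s)‖ < 1 := by
    intro x hx
    rw [norm_mul, hnormcp, Real.rpow_neg hℓ0.le]
    calc ‖x‖ * ((ℓ:ℝ) ^ s.re)⁻¹ ≤ M * ((ℓ:ℝ) ^ s.re)⁻¹ := by gcongr
      _ < 1 := by
          rw [← div_eq_mul_inv]
          exact (div_lt_one hrp0).mpr hMs
  have hbound : ∀ x z : ℂ, (‖x‖ ≤ ‖α‖ + ‖β‖ + 1) → (‖z‖ ≤ ‖γ‖ + ‖δ‖ + 1) →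
      ‖x * z * e‖ ≤ M := by
    intro x z h1 h2
    rw [norm_mul, norm_mul, hM]
    have h5 := norm_nonneg e
    have h6 := norm_nonneg x; have h7 := norm_nonneg z
    have h8 : (0:ℝ) ≤ ‖α‖ + ‖β‖ + 1 := by positivity
    have he1 : ‖e‖ ≤ ‖e‖ + 1 := by linarith
    exact mul_le_mul (mul_le_mul h1 h2 h7 h8) he1 h5 (by positivity)
  have haa : ‖α‖ ≤ ‖α‖ + ‖β‖ + 1 := by have := norm_nonneg β; linarith
  have hba : ‖β‖ ≤ ‖α‖ + ‖β‖ + 1 := by have := norm_nonneg α; linarith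
  have hgg : ‖γ‖ ≤ ‖γ‖ + ‖δ‖ + 1 := by have := norm_nonneg δ; linarith
  have hdg : ‖δ‖ ≤ ‖γ‖ + ‖δ‖ + 1 := by have := norm_nonneg γ; linarith
  have hx1 : ‖α * γ * e * (ℓ:ℂ) ^ (-s)‖ < 1 := hq _ (hbound _ _ haa hgg)
  have hx2 : ‖α * δ * e * (ℓ:ℂ) ^ (-s)‖ < 1 := hq _ (hbound _ _ haa hdg)
  have hx3 : ‖β * γ * e * (ℓ:ℂ) ^ (-s)‖ < 1 := hq _ (hbound _ _ hba hgg)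
  have hx4 : ‖β * δ * e * (ℓ:ℂ) ^ (-s)‖ < 1 := hq _ (hbound _ _ hba hdg)
  -- shell coefficients
  set c : ℕ → ℂ := fun m =>
    (α * γ * (α * γ * e * (ℓ:ℂ) ^ (-s)) ^ m - α * δ * (α * δ * e * (ℓ:ℂ) ^ (-s)) ^ m -
      β * γ * (β * γ * e * (ℓ:ℂ) ^ (-s)) ^ m + β * δ * (β * δ * e * (ℓ:ℂ) ^ (-s)) ^ m) /
      ((α - β) * (γ - δ)) with hc
  -- the cpow computation
  have hcpow : ∀ m : ℕ,
      (((ℓ:ℝ) ^ (-(m:ℤ)) : ℝ) : ℂ) ^ (s - 1) * ((ℓ:ℂ) ^ m)⁻¹ = ((ℓ:ℂ) ^ (-s)) ^ m := by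
    intro m
    have hcast : (((ℓ:ℝ) ^ (-(m:ℤ)) : ℝ) : ℂ) = (ℓ:ℂ) ^ (-(m:ℤ)) := by
      push_cast
      ring
    have harg : ((ℓ:ℂ)).arg = 0 := Complex.natCast_arg
    have h1 : ((ℓ:ℂ) ^ (-(m:ℤ))) ^ (s - 1) = (ℓ:ℂ) ^ ((((-(m:ℤ)) : ℤ) : ℂ) * (s - 1)) := by
      rw [Complex.cpow_int_mul' (by rw [harg]; simpa using Real.pi_pos)
        (by rw [harg]; simpa using Real.pi_pos.le)]
    have h2 : ((ℓ:ℂ) ^ m)⁻¹ = (ℓ:ℂ) ^ (-(m:ℂ)) := by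
      rw [Complex.cpow_neg, Complex.cpow_natCast]
    rw [hcast, h1, h2, ← Complex.cpow_add _ _ hℓC]
    have h3 : ((((-(m:ℤ)) : ℤ) : ℂ)) * (s - 1) + (-(m:ℂ)) = (((m:ℤ) : ℤ) : ℂ) * (-s) := by
      push_cast
      ring
    rw [h3, Complex.cpow_int_mul, zpow_natCast]
  -- the integrand
  set F : ℚ_[ℓ]ˣ → ℂ := fun y =>
    ((‖(y : ℚ_[ℓ])‖ : ℝ) : ℂ) ^ (s - 1) * (η y : ℂ) * W y with hF
  have hf_shell : ∀ (m : ℕ) (y : ℚ_[ℓ]ˣ), y ∈ S m → F y = c m := by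
    intro m y hy
    have hy' : ‖(y:ℚ_[ℓ])‖ = (ℓ:ℝ) ^ (-(m:ℤ)) := hy
    have key : F y = ((ℓ:ℂ) ^ (-s)) ^ m * e ^ m * ((α ^ (m+1) - β ^ (m+1)) / (α - β)) *
        ((γ ^ (m+1) - δ ^ (m+1)) / (γ - δ)) := by
      simp only [hF]
      rw [hy', hηS m y hy, hWm m y hy', ← hcpow m]
      ring
    rw [key, hc]
    rw [eq_div_iff hD]
    field_simp
    ring
  have hf_zero : ∀ y : ℚ_[ℓ]ˣ, (∀ m : ℕ, y ∉ S m) → F y = 0 := by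
    intro y hy
    have hy0 : (y : ℚ_[ℓ]) ≠ 0 := Units.ne_zero y
    have hyn : ‖(y:ℚ_[ℓ])‖ = (ℓ:ℝ) ^ (-(y:ℚ_[ℓ]).valuation) := Padic.norm_eq_zpow_neg_valuation hy0
    have hv : (y:ℚ_[ℓ]).valuation < 0 := by
      by_contra h
      push_neg at h
      obtain ⟨n, hn⟩ := Int.eq_ofNat_of_zero_le h
      refine hy n ?_
      show ‖(y:ℚ_[ℓ])‖ = (ℓ:ℝ) ^ (-(n:ℤ))
      rw [hyn, hn]
    have h1 : 1 < ‖(y:ℚ_[ℓ])‖ := by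
      rw [hyn]
      calc (1:ℝ) = (ℓ:ℝ) ^ (0:ℤ) := by rw [zpow_zero]
        _ < (ℓ:ℝ) ^ (-(y:ℚ_[ℓ]).valuation) := zpow_right_strictMono₀ hp (by linarith)
    simp only [hF]
    rw [hW0 y h1, mul_zero]
  have hFtsum : ∀ y : ℚ_[ℓ]ˣ, F y = ∑' m : ℕ, (S m).indicator (fun _ => c m) y := by
    intro y
    by_cases hy : ∃ m, y ∈ S m
    · obtain ⟨m, hm⟩ := hy
      rw [tsum_eq_single m, Set.indicator_of_mem hm, hf_shell m y hm]
      intro n hn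
      apply Set.indicator_of_notMem
      intro hyn
      exact (hdisj hn).ne_of_mem hyn hm rfl
    · push_neg at hy
      rw [hf_zero y hy]
      symm
      simp [Set.indicator_of_notMem (hy _)]
  -- summability
  have hsum : Summable c := by
    rw [hc]
    apply Summable.div_const
    exact ((((summable_geometric_of_norm_lt_one hx1).mul_left (α * γ)).sub
      ((summable_geometric_of_norm_lt_one hx2).mul_left (α * δ))).sub
      ((summable_geometric_of_norm_lt_one hx3).mul_left (β * γ))).add
      ((summable_geometric_of_norm_lt_one hx4).mul_left (β * δ))
  have hnormsum : Summable fun m => ‖c m‖ := summable_norm_iff.mpr hsum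
  -- measurability of F
  have hmeasind : ∀ m : ℕ, Measurable ((S m).indicator (fun _ => c m) : ℚ_[ℓ]ˣ → ℂ) :=
    fun m => measurable_const.indicator (hSm m)
  have hmeasF : Measurable F := by
    apply measurable_of_tendsto_metrizable
      (f := fun N y => ∑ m ∈ Finset.range N, (S m).indicator (fun _ => c m) y)
    · intro N
      exact Finset.measurable_sum _ fun m _ => hmeasind m
    · rw [tendsto_pi_nhds]
      intro y
      rw [hFtsum y]
      have hsmbl : Summable fun m => (S m).indicator (fun _ => c m) y := by
        apply Summable.of_norm_bounded hnormsum
        intro m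
        exact norm_indicator_le_norm_self _ _
      exact hsmbl.hasSum.tendsto_sum_nat
  -- lintegral of each indicator
  have hlintm : ∀ m : ℕ,
      ∫⁻ y, (‖(S m).indicator (fun _ => c m) y‖₊ : ENNReal) ∂ν = (‖c m‖₊ : ENNReal) := by
    intro m
    have hpt : ∀ y, (‖(S m).indicator (fun _ => c m) y‖₊ : ENNReal) =
        (S m).indicator (fun _ => (‖c m‖₊ : ENNReal)) y := by
      intro y
      by_cases hy : y ∈ S m
      · rw [Set.indicator_of_mem hy, Set.indicator_of_mem hy]
      · rw [Set.indicator_of_notMem hy, Set.indicator_of_notMem hy, nnnorm_zero,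
          ENNReal.coe_zero]
    simp_rw [hpt]
    rw [lintegral_indicator_const (hSm m), hνS m, mul_one]
  have hlsum : ∑' m : ℕ, ∫⁻ y, (‖(S m).indicator (fun _ => c m) y‖₊ : ENNReal) ∂ν ≠ ⊤ := by
    simp_rw [hlintm]
    rw [ENNReal.tsum_coe_ne_top_iff_summable, ← NNReal.summable_coe]
    exact hnormsum
  -- integrability
  have hIntF : Integrable F ν := by
    refine ⟨hmeasF.aestronglyMeasurable, ?_⟩
    rw [hasFiniteIntegral_def]
    have hpt : ∀ y : ℚ_[ℓ]ˣ, (‖F y‖₊ : ENNReal) =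
        ∑' m : ℕ, (S m).indicator (fun _ => (‖c m‖₊ : ENNReal)) y := by
      intro y
      by_cases hy : ∃ m, y ∈ S m
      · obtain ⟨m, hm⟩ := hy
        rw [tsum_eq_single m, Set.indicator_of_mem hm, hf_shell m y hm]
        intro n hn
        apply Set.indicator_of_notMem
        intro hyn
        exact (hdisj hn).ne_of_mem hyn hm rfl
      · push_neg at hy
        rw [hf_zero y hy]
        simp [Set.indicator_of_notMem (hy _)]
    calc ∫⁻ y, (‖F y‖₊ : ENNReal) ∂ν
        = ∫⁻ y, ∑' m : ℕ, (S m).indicator (fun _ => (‖c m‖₊ : ENNReal)) y ∂ν :=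
          lintegral_congr hpt
      _ = ∑' m : ℕ, ∫⁻ y, (S m).indicator (fun _ => (‖c m‖₊ : ENNReal)) y ∂ν :=
          lintegral_tsum fun m =>
            (measurable_const.indicator (hSm m)).aemeasurable
      _ = ∑' m : ℕ, (‖c m‖₊ : ENNReal) := by
          congr 1
          funext m
          rw [lintegral_indicator_const (hSm m), hνS m, mul_one]
      _ < ⊤ := by
          rw [lt_top_iff_ne_top, ENNReal.tsum_coe_ne_top_iff_summable,
            ← NNReal.summable_coe]
          exact hnormsum
  refine ⟨hIntF, ?_⟩
  -- the integral equals the sum of the coefficients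
  have hInt : ∫ y, F y ∂ν = ∑' m : ℕ, c m := by
    calc ∫ y, F y ∂ν = ∫ y, ∑' m : ℕ, (S m).indicator (fun _ => c m) y ∂ν :=
          integral_congr_ae (Filter.Eventually.of_forall hFtsum)
      _ = ∑' m : ℕ, ∫ y, (S m).indicator (fun _ => c m) y ∂ν :=
          integral_tsum (fun m => (hmeasind m).aestronglyMeasurable) hlsum
      _ = ∑' m : ℕ, c m := by
          congr 1
          funext m
          rw [integral_indicator_const (c m) (hSm m), measureReal_def, hνS m, ENNReal.toReal_one, one_smul]
  -- the value of the sum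
  have htsum : ∑' m : ℕ, c m =
      (α * γ * (1 - α * γ * e * (ℓ:ℂ) ^ (-s))⁻¹ - α * δ * (1 - α * δ * e * (ℓ:ℂ) ^ (-s))⁻¹ -
        β * γ * (1 - β * γ * e * (ℓ:ℂ) ^ (-s))⁻¹ + β * δ * (1 - β * δ * e * (ℓ:ℂ) ^ (-s))⁻¹) /
        ((α - β) * (γ - δ)) := by
    have H : HasSum c
        ((α * γ * (1 - α * γ * e * (ℓ:ℂ) ^ (-s))⁻¹ - α * δ * (1 - α * δ * e * (ℓ:ℂ) ^ (-s))⁻¹ -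
          β * γ * (1 - β * γ * e * (ℓ:ℂ) ^ (-s))⁻¹ + β * δ * (1 - β * δ * e * (ℓ:ℂ) ^ (-s))⁻¹) /
          ((α - β) * (γ - δ))) := by
      rw [hc]
      exact (((((hasSum_geometric_of_norm_lt_one hx1).mul_left (α * γ)).sub
        ((hasSum_geometric_of_norm_lt_one hx2).mul_left (α * δ))).sub
        ((hasSum_geometric_of_norm_lt_one hx3).mul_left (β * γ))).add
        ((hasSum_geometric_of_norm_lt_one hx4).mul_left (β * δ))).div_const _
    exact H.tsum_eq
  -- nonvanishing of the denominators
  have hne : ∀ x : ℂ, ‖x‖ < 1 → 1 - x ≠ 0 := by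
    intro x hx h
    rw [sub_eq_zero] at h
    rw [← h] at hx
    simp at hx
  have hd1 := hne _ hx1
  have hd2 := hne _ hx2
  have hd3 := hne _ hx3
  have hd4 := hne _ hx4
  -- rewrite ℓ^(-2s)
  have h2s : (ℓ:ℂ) ^ (-(2 * s)) = ((ℓ:ℂ) ^ (-s)) ^ 2 := by
    rw [show -(2 * s) = ((2:ℕ) : ℂ) * (-s) by push_cast; ring, Complex.cpow_nat_mul]
  rw [hInt, htsum, h2s]
  set w : ℂ := (ℓ:ℂ) ^ (-s) with hw
  have e1 : (1 - α * γ * e * w) * (1 - α * γ * e * w)⁻¹ = 1 := mul_inv_cancel₀ hd1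
  have e2 : (1 - α * δ * e * w) * (1 - α * δ * e * w)⁻¹ = 1 := mul_inv_cancel₀ hd2
  have e3 : (1 - β * γ * e * w) * (1 - β * γ * e * w)⁻¹ = 1 := mul_inv_cancel₀ hd3
  have e4 : (1 - β * δ * e * w) * (1 - β * δ * e * w)⁻¹ = 1 := mul_inv_cancel₀ hd4
  rw [← mul_div_assoc, div_eq_iff hD]
  linear_combination
    (α * γ * (1 - α * δ * e * w) * (1 - β * γ * e * w) * (1 - β * δ * e * w)) * e1 -
    (α * δ * (1 - α * γ * e * w) * (1 - β * γ * e * w) * (1 - β * δ * e * w)) * e2 -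
    (β * γ * (1 - α * γ * e * w) * (1 - α * δ * e * w) * (1 - β * δ * e * w)) * e3 +
    (β * δ * (1 - α * γ * e * w) * (1 - α * δ * e * w) * (1 - β * γ * e * w)) * e4
end

section
/- In the split-prime zeta-integral setting, with U(ℓ) the diagonal Hecke operator whose action on the spherical Whittaker function satisfies 𝒲_{U(ℓ)φ}(diag(y,1),diag(y,1)) = 0 for |y| ≥ ℓ and = ℓ²𝒲_φ(diag(ℓy,1),diag(ℓy,1)) for |y| < ℓ, we have Z(σ, η, U(ℓ)φ₀, s) = (ℓ^{s+1}/η(ℓ))·[L(η²χ_σ, 2s)^{−1} − L(σ⊗η, s)^{−1}]. -/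
open MeasureTheory

set_option maxHeartbeats 1000000 in
private lemma aux_alg (a b g d e K L : ℂ) (hab : a - b ≠ 0) (hgd : g - d ≠ 0) (he0 : e ≠ 0) (hK : K ≠ 0)
    (h1' : (1:ℂ) - a*g*(e*K) ≠ 0) (h2' : (1:ℂ) - a*d*(e*K) ≠ 0)
    (h3' : (1:ℂ) - b*g*(e*K) ≠ 0) (h4' : (1:ℂ) - b*d*(e*K) ≠ 0) :
    ((1 - a*g*e*K) * (1 - a*d*e*K) * (1 - b*g*e*K) * (1 - b*d*e*K)) *
      (L / ((a - b) * (g - d)) *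
        ((a*g)^2 * (1 - (a*g) * (e*K))⁻¹ - (a*d)^2 * (1 - (a*d) * (e*K))⁻¹
          - (b*g)^2 * (1 - (b*g) * (e*K))⁻¹ + (b*d)^2 * (1 - (b*d) * (e*K))⁻¹)) =
    K⁻¹ * L / e * ((1 - a*b*g*d*e^2*K^2) -
      (1 - a*g*e*K) * (1 - a*d*e*K) * (1 - b*g*e*K) * (1 - b*d*e*K)) := by
  set D : ℂ := (1 - a*g*e*K) * (1 - a*d*e*K) * (1 - b*g*e*K) * (1 - b*d*e*K) with hD
  have t1 : D * ((a*g)^2 * (1 - (a*g) * (e*K))⁻¹)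
      = (a*g)^2 * ((1 - a*d*e*K) * (1 - b*g*e*K) * (1 - b*d*e*K)) := by
    rw [show D * ((a*g)^2 * (1 - (a*g) * (e*K))⁻¹)
        = ((1 - a*g*(e*K)) * (1 - a*g*(e*K))⁻¹) *
          ((a*g)^2 * ((1 - a*d*e*K) * (1 - b*g*e*K) * (1 - b*d*e*K))) from by rw [hD]; ring,
      mul_inv_cancel₀ h1', one_mul]
  have t2 : D * ((a*d)^2 * (1 - (a*d) * (e*K))⁻¹)
      = (a*d)^2 * ((1 - a*g*e*K) * (1 - b*g*e*K) * (1 - b*d*e*K)) := by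
    rw [show D * ((a*d)^2 * (1 - (a*d) * (e*K))⁻¹)
        = ((1 - a*d*(e*K)) * (1 - a*d*(e*K))⁻¹) *
          ((a*d)^2 * ((1 - a*g*e*K) * (1 - b*g*e*K) * (1 - b*d*e*K))) from by rw [hD]; ring,
      mul_inv_cancel₀ h2', one_mul]
  have t3 : D * ((b*g)^2 * (1 - (b*g) * (e*K))⁻¹)
      = (b*g)^2 * ((1 - a*g*e*K) * (1 - a*d*e*K) * (1 - b*d*e*K)) := by
    rw [show D * ((b*g)^2 * (1 - (b*g) * (e*K))⁻¹)
        = ((1 - b*g*(e*K)) * (1 - b*g*(e*K))⁻¹) *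
          ((b*g)^2 * ((1 - a*g*e*K) * (1 - a*d*e*K) * (1 - b*d*e*K))) from by rw [hD]; ring,
      mul_inv_cancel₀ h3', one_mul]
  have t4 : D * ((b*d)^2 * (1 - (b*d) * (e*K))⁻¹)
      = (b*d)^2 * ((1 - a*g*e*K) * (1 - a*d*e*K) * (1 - b*g*e*K)) := by
    rw [show D * ((b*d)^2 * (1 - (b*d) * (e*K))⁻¹)
        = ((1 - b*d*(e*K)) * (1 - b*d*(e*K))⁻¹) *
          ((b*d)^2 * ((1 - a*g*e*K) * (1 - a*d*e*K) * (1 - b*g*e*K))) from by rw [hD]; ring,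
      mul_inv_cancel₀ h4', one_mul]
  have hDS : D * ((a*g)^2 * (1 - (a*g) * (e*K))⁻¹ - (a*d)^2 * (1 - (a*d) * (e*K))⁻¹
          - (b*g)^2 * (1 - (b*g) * (e*K))⁻¹ + (b*d)^2 * (1 - (b*d) * (e*K))⁻¹)
      = (a*g)^2 * ((1 - a*d*e*K) * (1 - b*g*e*K) * (1 - b*d*e*K))
        - (a*d)^2 * ((1 - a*g*e*K) * (1 - b*g*e*K) * (1 - b*d*e*K))
        - (b*g)^2 * ((1 - a*g*e*K) * (1 - a*d*e*K) * (1 - b*d*e*K))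
        + (b*d)^2 * ((1 - a*g*e*K) * (1 - a*d*e*K) * (1 - b*g*e*K)) := by
    rw [mul_add, mul_sub, mul_sub, t1, t2, t3, t4]
  calc D * (L / ((a - b) * (g - d)) *
        ((a*g)^2 * (1 - (a*g) * (e*K))⁻¹ - (a*d)^2 * (1 - (a*d) * (e*K))⁻¹
          - (b*g)^2 * (1 - (b*g) * (e*K))⁻¹ + (b*d)^2 * (1 - (b*d) * (e*K))⁻¹))
      = L * (D * ((a*g)^2 * (1 - (a*g) * (e*K))⁻¹ - (a*d)^2 * (1 - (a*d) * (e*K))⁻¹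
          - (b*g)^2 * (1 - (b*g) * (e*K))⁻¹ + (b*d)^2 * (1 - (b*d) * (e*K))⁻¹))
          / ((a - b) * (g - d)) := by ring
    _ = L * ((a*g)^2 * ((1 - a*d*e*K) * (1 - b*g*e*K) * (1 - b*d*e*K))
        - (a*d)^2 * ((1 - a*g*e*K) * (1 - b*g*e*K) * (1 - b*d*e*K))
        - (b*g)^2 * ((1 - a*g*e*K) * (1 - a*d*e*K) * (1 - b*d*e*K))
        + (b*d)^2 * ((1 - a*g*e*K) * (1 - a*d*e*K) * (1 - b*g*e*K)))
          / ((a - b) * (g - d)) := by rw [hDS]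
    _ = K⁻¹ * L / e * ((1 - a*b*g*d*e^2*K^2) - D) := by
        rw [hD, div_eq_iff (mul_ne_zero hab hgd),
          show K⁻¹ * L / e * ((1 - a*b*g*d*e^2*K^2) -
              (1 - a*g*e*K) * (1 - a*d*e*K) * (1 - b*g*e*K) * (1 - b*d*e*K)) * ((a - b) * (g - d))
            = L * ((1 - a*b*g*d*e^2*K^2) -
              (1 - a*g*e*K) * (1 - a*d*e*K) * (1 - b*g*e*K) * (1 - b*d*e*K)) * ((a - b) * (g - d))
              / (e * K) from by ring,
          eq_div_iff (mul_ne_zero he0 hK)]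
        ring


set_option maxHeartbeats 2000000 in
/-- Action of the diagonal Hecke operator `U(ℓ)` on the zeta integral, split case:
with `𝒲_{U(ℓ)φ₀}(diag(y,1),diag(y,1)) = 0` for `|y| ≥ ℓ` and
`= ℓ²𝒲₀(diag(ℓy,1),diag(ℓy,1))` for `|y| < ℓ`, one has
`Z(σ,η,U(ℓ)φ₀,s) = (ℓ^{s+1}/η(ℓ))[L(η²χ_σ,2s)⁻¹ − L(σ⊗η,s)⁻¹]`. -/
theorem stmt11 (ℓ : ℕ) [Fact ℓ.Prime]
    [MeasurableSpace ℚ_[ℓ]ˣ] [BorelSpace ℚ_[ℓ]ˣ]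
    (ν : Measure ℚ_[ℓ]ˣ) [ν.IsHaarMeasure]
    (hν : ν {y : ℚ_[ℓ]ˣ | ‖(y : ℚ_[ℓ])‖ = 1} = 1)
    (α β γ δ : ℂ) (hαβ : α ≠ β) (hγδ : γ ≠ δ)
    (η : ℚ_[ℓ]ˣ →* ℂˣ) (hη : ∀ u : ℚ_[ℓ]ˣ, ‖(u : ℚ_[ℓ])‖ = 1 → η u = 1)
    (lu : ℚ_[ℓ]ˣ) (hlu : (lu : ℚ_[ℓ]) = (ℓ : ℚ_[ℓ]))
    (e : ℂ) (he : e = (η lu : ℂ))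
    (W WU : ℚ_[ℓ]ˣ → ℂ)
    (hW0 : ∀ y : ℚ_[ℓ]ˣ, 1 < ‖(y : ℚ_[ℓ])‖ → W y = 0)
    (hWm : ∀ (m : ℕ) (y : ℚ_[ℓ]ˣ), ‖(y : ℚ_[ℓ])‖ = (ℓ : ℝ) ^ (-(m : ℤ)) →
      W y = ((ℓ : ℂ) ^ m)⁻¹ * ((α ^ (m + 1) - β ^ (m + 1)) / (α - β)) *
        ((γ ^ (m + 1) - δ ^ (m + 1)) / (γ - δ)))
    (hWU0 : ∀ y : ℚ_[ℓ]ˣ, (ℓ : ℝ) ≤ ‖(y : ℚ_[ℓ])‖ → WU y = 0)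
    (hWU : ∀ y : ℚ_[ℓ]ˣ, ‖(y : ℚ_[ℓ])‖ < (ℓ : ℝ) → WU y = (ℓ : ℂ) ^ 2 * W (lu * y)) :
    ∃ r : ℝ, ∀ s : ℂ, r < s.re →
      ((1 - α * γ * e * (ℓ : ℂ) ^ (-s)) * (1 - α * δ * e * (ℓ : ℂ) ^ (-s)) *
            (1 - β * γ * e * (ℓ : ℂ) ^ (-s)) * (1 - β * δ * e * (ℓ : ℂ) ^ (-s))) *
          (∫ y : ℚ_[ℓ]ˣ, ((‖(y : ℚ_[ℓ])‖ : ℝ) : ℂ) ^ (s - 1) * (η y : ℂ) * WU y ∂ν) =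
        (ℓ : ℂ) ^ (s + 1) / e *
          ((1 - α * β * γ * δ * e ^ 2 * (ℓ : ℂ) ^ (-(2 * s))) -
            (1 - α * γ * e * (ℓ : ℂ) ^ (-s)) * (1 - α * δ * e * (ℓ : ℂ) ^ (-s)) *
              (1 - β * γ * e * (ℓ : ℂ) ^ (-s)) * (1 - β * δ * e * (ℓ : ℂ) ^ (-s))) := by
  have hp : ℓ.Prime := Fact.out
  have hℓR1 : (1:ℝ) < (ℓ:ℝ) := by exact_mod_cast hp.one_lt
  have hℓR0 : (0:ℝ) < (ℓ:ℝ) := by linarith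
  have hℓC : (ℓ:ℂ) ≠ 0 := Nat.cast_ne_zero.mpr hp.ne_zero
  have he0 : e ≠ 0 := by rw [he]; exact Units.ne_zero _
  have hαβ' : α - β ≠ 0 := sub_ne_zero.mpr hαβ
  have hγδ' : γ - δ ≠ 0 := sub_ne_zero.mpr hγδ
  have hlun : ‖(lu : ℚ_[ℓ])‖ = (ℓ:ℝ)⁻¹ := by rw [hlu]; exact Padic.norm_p
  -- shells
  set T : ℕ → Set ℚ_[ℓ]ˣ := fun m => {y : ℚ_[ℓ]ˣ | ‖(y : ℚ_[ℓ])‖ = (ℓ:ℝ) ^ (-(m:ℤ))} with hT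
  have hTmeas : ∀ m, MeasurableSet (T m) := by
    intro m
    have hc : Continuous fun y : ℚ_[ℓ]ˣ => ‖(y : ℚ_[ℓ])‖ :=
      continuous_norm.comp Units.continuous_val
    exact hc.measurable (measurableSet_singleton ((ℓ:ℝ) ^ (-(m:ℤ))))
  have hTnorm : ∀ (m : ℕ) (y : ℚ_[ℓ]ˣ),
      ‖(((lu ^ m)⁻¹ * y : ℚ_[ℓ]ˣ) : ℚ_[ℓ])‖ = (ℓ:ℝ) ^ m * ‖(y : ℚ_[ℓ])‖ := by
    intro m y
    rw [Units.val_mul, norm_mul, Units.val_inv_eq_inv_val, norm_inv,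
      Units.val_pow_eq_pow_val, norm_pow, hlun]
    congr 1
    rw [inv_pow, inv_inv]
  have hmemT : ∀ (m : ℕ) (y : ℚ_[ℓ]ˣ),
      y ∈ T m ↔ (ℓ:ℝ) ^ m * ‖(y : ℚ_[ℓ])‖ = 1 := by
    intro m y
    have hpm : ((ℓ:ℝ)) ^ m ≠ 0 := (pow_pos hℓR0 m).ne'
    constructor
    · intro hy
      have hy' : ‖(y : ℚ_[ℓ])‖ = (ℓ:ℝ) ^ (-(m:ℤ)) := hy
      rw [hy', zpow_neg, zpow_natCast]
      exact mul_inv_cancel₀ hpm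
    · intro hy
      have : ‖(y : ℚ_[ℓ])‖ = ((ℓ:ℝ) ^ m)⁻¹ := eq_inv_of_mul_eq_one_right hy
      show ‖(y : ℚ_[ℓ])‖ = (ℓ:ℝ) ^ (-(m:ℤ))
      rw [this, zpow_neg, zpow_natCast]
  have hTvol : ∀ m, ν (T m) = 1 := by
    intro m
    have hpre : T m = (fun y => (lu ^ m)⁻¹ * y) ⁻¹' (T 0) := by
      ext y
      rw [Set.mem_preimage, hmemT m y, hmemT 0 ((lu ^ m)⁻¹ * y), hTnorm m y]
      simp
    rw [hpre, measure_preimage_mul]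
    have hT0 : T 0 = {y : ℚ_[ℓ]ˣ | ‖(y : ℚ_[ℓ])‖ = 1} := by
      ext y
      show ‖(y : ℚ_[ℓ])‖ = (ℓ:ℝ) ^ (-(0:ℕ):ℤ) ↔ ‖(y : ℚ_[ℓ])‖ = 1
      norm_num
    rw [hT0, hν]
  -- the bound
  set M : ℝ := ‖e‖ * ((‖α‖ + ‖β‖ + 1) * (‖γ‖ + ‖δ‖ + 1)) + 1 with hM
  have hM0 : 0 < M := by positivity
  refine ⟨Real.logb ℓ M, fun s hs => ?_⟩
  set P : ℝ := (ℓ:ℝ) ^ s.re with hP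
  have hMP : M < P := by
    have h0 : (ℓ:ℝ) ^ Real.logb ℓ M = M := Real.rpow_logb hℓR0 (ne_of_gt hℓR1) hM0
    calc M = (ℓ:ℝ) ^ Real.logb ℓ M := h0.symm
      _ < P := (Real.rpow_lt_rpow_left_iff hℓR1).mpr hs
  have hP0 : 0 < P := lt_trans hM0 hMP
  set K : ℂ := (ℓ:ℂ) ^ (-s) with hK
  have hKnorm : ‖K‖ = P⁻¹ := by
    rw [hK, Complex.norm_natCast_cpow_of_pos hp.pos, Complex.neg_re,
      Real.rpow_neg hℓR0.le]
  have hKs : (ℓ:ℂ) ^ s * K = 1 := by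
    rw [hK, ← Complex.cpow_add _ _ hℓC, add_neg_cancel, Complex.cpow_zero]
  have hsK : (ℓ:ℂ) ^ s = K⁻¹ := eq_inv_of_mul_eq_one_left hKs
  have hKne : K ≠ 0 := right_ne_zero_of_mul_eq_one hKs
  have key : ∀ t : ℂ, ‖t‖ * ‖e‖ + 1 ≤ M → ‖t * (e * K)‖ < 1 := by
    intro t ht
    have h1 : ‖t * (e * K)‖ = (‖t‖ * ‖e‖) * P⁻¹ := by
      rw [norm_mul, norm_mul, hKnorm]; ring
    rw [h1]
    have h2 : ‖t‖ * ‖e‖ < P := by linarith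
    calc (‖t‖ * ‖e‖) * P⁻¹ < P * P⁻¹ := by
          exact mul_lt_mul_of_pos_right h2 (inv_pos.mpr hP0)
      _ = 1 := mul_inv_cancel₀ hP0.ne'
  have nn : ∀ x : ℂ, 0 ≤ ‖x‖ := fun x => norm_nonneg x
  have hb : ∀ x z : ℂ, ‖x‖ ≤ ‖α‖ + ‖β‖ → ‖z‖ ≤ ‖γ‖ + ‖δ‖ → ‖x * z‖ * ‖e‖ + 1 ≤ M := by
    intro x z hx hz
    rw [norm_mul]
    have h1 : ‖x‖ * ‖z‖ ≤ (‖α‖ + ‖β‖ + 1) * (‖γ‖ + ‖δ‖ + 1) :=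
      mul_le_mul (by linarith) (by linarith) (nn z) (by positivity)
    have h2 : (‖x‖ * ‖z‖) * ‖e‖ ≤ ((‖α‖ + ‖β‖ + 1) * (‖γ‖ + ‖δ‖ + 1)) * ‖e‖ :=
      mul_le_mul_of_nonneg_right h1 (nn e)
    rw [hM]
    linarith [h2]
  have h1 : ‖α * γ * (e * K)‖ < 1 :=
    key _ (hb α γ (le_add_of_nonneg_right (nn β)) (le_add_of_nonneg_right (nn δ)))
  have h2 : ‖α * δ * (e * K)‖ < 1 :=
    key _ (hb α δ (le_add_of_nonneg_right (nn β)) (le_add_of_nonneg_left (nn γ)))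
  have h3 : ‖β * γ * (e * K)‖ < 1 :=
    key _ (hb β γ (le_add_of_nonneg_left (nn α)) (le_add_of_nonneg_right (nn δ)))
  have h4 : ‖β * δ * (e * K)‖ < 1 :=
    key _ (hb β δ (le_add_of_nonneg_left (nn α)) (le_add_of_nonneg_left (nn γ)))
  -- coefficients
  set c : ℕ → ℂ := fun m => ((ℓ:ℂ) * K) ^ m * e ^ m *
    ((ℓ:ℂ) ^ 2 * (((ℓ:ℂ) ^ (m + 1))⁻¹ * ((α ^ (m + 1 + 1) - β ^ (m + 1 + 1)) / (α - β)) *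
      ((γ ^ (m + 1 + 1) - δ ^ (m + 1 + 1)) / (γ - δ)))) with hc
  set F : ℕ → ℚ_[ℓ]ˣ → ℂ := fun m => (T m).indicator (fun _ => c m) with hF
  -- cpow of shell norms
  have hbase : (((ℓ:ℝ)⁻¹ : ℝ) : ℂ) ^ (s - 1) = (ℓ:ℂ) * K := by
    have harg : ((ℓ:ℂ)).arg ≠ Real.pi := by
      rw [Complex.natCast_arg]; exact Real.pi_ne_zero.symm
    rw [Complex.ofReal_inv, Complex.ofReal_natCast,
      Complex.inv_cpow _ _ harg, Complex.cpow_sub _ _ hℓC, Complex.cpow_one, hsK,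
      inv_div, div_inv_eq_mul]
  have hcpow : ∀ m : ℕ, (((ℓ:ℝ) ^ (-(m:ℤ)) : ℝ) : ℂ) ^ (s - 1) = ((ℓ:ℂ) * K) ^ m := by
    intro m
    induction m with
    | zero => norm_num
    | succ n ih =>
      have hsplit : ((ℓ:ℝ) ^ (-((n:ℕ)+1:ℕ):ℤ) : ℝ) = (ℓ:ℝ) ^ (-(n:ℤ)) * (ℓ:ℝ)⁻¹ := by
        rw [← zpow_neg_one, ← zpow_add₀ (ne_of_gt hℓR0)]
        congr 1
        push_cast; ring
      rw [hsplit, Complex.ofReal_mul, Complex.mul_cpow_ofReal_nonneg (by positivity) (by positivity)]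
      rw [ih, hbase]
      ring
  -- pointwise identity
  have hfF : ∀ y : ℚ_[ℓ]ˣ, ((‖(y:ℚ_[ℓ])‖ : ℝ) : ℂ) ^ (s - 1) * (η y : ℂ) * WU y
      = ∑' m, F m y := by
    intro y
    have hy0 : (y : ℚ_[ℓ]) ≠ 0 := Units.ne_zero y
    have hval : ‖(y:ℚ_[ℓ])‖ = (ℓ:ℝ) ^ (-(y:ℚ_[ℓ]).valuation) := Padic.norm_eq_zpow_neg_valuation hy0
    by_cases hv : 0 ≤ (y:ℚ_[ℓ]).valuation
    · set m : ℕ := (y:ℚ_[ℓ]).valuation.toNat with hm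
      have hmv : (m:ℤ) = (y:ℚ_[ℓ]).valuation := Int.toNat_of_nonneg hv
      have hym : ‖(y:ℚ_[ℓ])‖ = (ℓ:ℝ) ^ (-(m:ℤ)) := by rw [hval, hmv]
      have hyT : y ∈ T m := hym
      have htsum : ∑' n, F n y = c m := by
        rw [tsum_eq_single m ?_]
        · rw [hF]; exact Set.indicator_of_mem hyT _
        · intro n hn
          apply Set.indicator_of_notMem
          intro hyn
          have hyn' : ‖(y:ℚ_[ℓ])‖ = (ℓ:ℝ) ^ (-(n:ℤ)) := hyn
          have : (-(m:ℤ)) = (-(n:ℤ)) :=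
            zpow_right_injective₀ hℓR0 (ne_of_gt hℓR1) (hym.symm.trans hyn')
          exact hn (by omega)
      rw [htsum]
      have hlt : ‖(y:ℚ_[ℓ])‖ < (ℓ:ℝ) := by
        rw [hym]
        calc (ℓ:ℝ) ^ (-(m:ℤ)) ≤ (ℓ:ℝ) ^ (0:ℤ) :=
              zpow_le_zpow_right₀ hℓR1.le (by omega)
          _ = 1 := zpow_zero _
          _ < (ℓ:ℝ) := hℓR1
      have hWUy : WU y = (ℓ:ℂ) ^ 2 * W (lu * y) := hWU y hlt
      have hnlm : ‖((lu * y : ℚ_[ℓ]ˣ) : ℚ_[ℓ])‖ = (ℓ:ℝ) ^ (-((m+1:ℕ):ℤ)) := by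
        rw [Units.val_mul, norm_mul, hlun, hym, ← zpow_neg_one,
          ← zpow_add₀ (ne_of_gt hℓR0)]
        congr 1
        push_cast; ring
      have hWy := hWm (m + 1) (lu * y) hnlm
      have huT : ‖(((lu ^ m)⁻¹ * y : ℚ_[ℓ]ˣ) : ℚ_[ℓ])‖ = 1 := by
        rw [hTnorm m y, hym, zpow_neg, zpow_natCast]
        exact mul_inv_cancel₀ (pow_pos hℓR0 m).ne'
      have hηy : ((η y : ℂˣ) : ℂ) = e ^ m := by
        have hy' : y = lu ^ m * ((lu ^ m)⁻¹ * y) := by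
          rw [← mul_assoc, mul_inv_cancel, one_mul]
        calc ((η y : ℂˣ) : ℂ)
            = ((η (lu ^ m) : ℂˣ) : ℂ) * ((η ((lu ^ m)⁻¹ * y) : ℂˣ) : ℂ) := by
              rw [← Units.val_mul, ← map_mul, ← hy']
          _ = e ^ m := by
              rw [hη _ huT, Units.val_one, mul_one, map_pow,
                Units.val_pow_eq_pow_val, he]
      rw [hym, hcpow m, hηy, hWUy, hWy, hc]
    · push_neg at hv
      have hge : (ℓ:ℝ) ≤ ‖(y:ℚ_[ℓ])‖ := by
        rw [hval]
        calc (ℓ:ℝ) = (ℓ:ℝ) ^ (1:ℤ) := (zpow_one _).symm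
          _ ≤ _ := zpow_le_zpow_right₀ hℓR1.le (by omega)
      rw [hWU0 y hge, mul_zero]
      symm
      have hz : ∀ n, F n y = 0 := by
        intro n
        apply Set.indicator_of_notMem
        intro hyn
        have hyn' : ‖(y:ℚ_[ℓ])‖ = (ℓ:ℝ) ^ (-(n:ℤ)) := hyn
        have hle1 : (ℓ:ℝ) ^ (-(n:ℤ)) ≤ 1 := zpow_le_one_of_nonpos₀ hℓR1.le (by omega)
        rw [hyn'] at hge
        linarith
      calc ∑' n, F n y = ∑' _ : ℕ, (0:ℂ) := tsum_congr hz
        _ = 0 := tsum_zero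
  -- integrability and exchange
  have hFint : ∀ m, Integrable (F m) ν := by
    intro m
    rw [hF]
    refine (integrable_indicator_iff (hTmeas m)).mpr ?_
    refine (integrableOn_const_iff (hC := by simp)).mpr (Or.inr ?_)
    rw [hTvol m]
    exact ENNReal.one_lt_top
  have hintF : ∀ m, ∫ y, F m y ∂ν = c m := by
    intro m
    rw [hF]
    rw [integral_indicator_const _ (hTmeas m), measureReal_def, hTvol m]
    simp
  have hcgeom : ∀ m, c m = (ℓ:ℂ) / ((α - β) * (γ - δ)) *
      ((α*γ)^2 * ((α*γ) * (e*K))^m - (α*δ)^2 * ((α*δ) * (e*K))^m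
        - (β*γ)^2 * ((β*γ) * (e*K))^m + (β*δ)^2 * ((β*δ) * (e*K))^m) := by
    intro m
    rw [hc]
    have hpne : ((ℓ:ℂ)) ^ (m+1) ≠ 0 := pow_ne_zero _ hℓC
    field_simp
    ring
  have hgs1 := (hasSum_geometric_of_norm_lt_one h1).mul_left ((α*γ)^2)
  have hgs2 := (hasSum_geometric_of_norm_lt_one h2).mul_left ((α*δ)^2)
  have hgs3 := (hasSum_geometric_of_norm_lt_one h3).mul_left ((β*γ)^2)
  have hgs4 := (hasSum_geometric_of_norm_lt_one h4).mul_left ((β*δ)^2)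
  have hsumc : Summable c := by
    refine Summable.congr ?_ (fun m => (hcgeom m).symm)
    exact ((((hgs1.sub hgs2).sub hgs3).add hgs4).mul_left _).summable
  have hFnorm : ∀ m, ∫ y, ‖F m y‖ ∂ν = ‖c m‖ := by
    intro m
    have hind : (fun y => ‖F m y‖) = (T m).indicator (fun _ => ‖c m‖) := by
      funext y
      rw [hF]
      exact norm_indicator_eq_indicator_norm _ _
    rw [hind, integral_indicator_const _ (hTmeas m), measureReal_def, hTvol m]
    simp
  have hFsum : Summable fun m => ∫ y, ‖F m y‖ ∂ν := by
    refine Summable.congr ?_ (fun m => (hFnorm m).symm)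
    exact summable_norm_iff.mpr hsumc
  have hint : (∫ y : ℚ_[ℓ]ˣ, ((‖(y : ℚ_[ℓ])‖ : ℝ) : ℂ) ^ (s - 1) * (η y : ℂ) * WU y ∂ν)
      = ∑' m, c m := by
    rw [integral_congr_ae (Filter.Eventually.of_forall hfF),
      ← integral_tsum_of_summable_integral_norm hFint hFsum]
    exact tsum_congr hintF
  rw [hint]
  have hgsum : ∑' m, c m = (ℓ:ℂ) / ((α - β) * (γ - δ)) *
      ((α*γ)^2 * (1 - (α*γ) * (e*K))⁻¹ - (α*δ)^2 * (1 - (α*δ) * (e*K))⁻¹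
        - (β*γ)^2 * (1 - (β*γ) * (e*K))⁻¹ + (β*δ)^2 * (1 - (β*δ) * (e*K))⁻¹) := by
    rw [tsum_congr hcgeom]
    exact ((((hgs1.sub hgs2).sub hgs3).add hgs4).mul_left _).tsum_eq
  rw [hgsum]
  have hne1 : ∀ x : ℂ, ‖x‖ < 1 → (1:ℂ) - x ≠ 0 := by
    intro x hx h
    rw [sub_eq_zero] at h
    rw [← h] at hx
    simp at hx
  rw [show (ℓ:ℂ) ^ (s + 1) = K⁻¹ * (ℓ:ℂ) from by
      rw [Complex.cpow_add _ _ hℓC, Complex.cpow_one, hsK],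
    show (ℓ:ℂ) ^ (-(2 * s)) = K ^ 2 from by
      rw [show -(2 * s) = -s + -s from by ring, Complex.cpow_add _ _ hℓC, ← hK, sq]]
  exact aux_alg α β γ δ e K (ℓ:ℂ) hαβ' hγδ' he0 hKne
    (hne1 _ h1) (hne1 _ h2) (hne1 _ h3) (hne1 _ h4)
end
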